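/- arXiv:1705.00642 — 7 statements merged into one kernel-verified Lean document; each statement's English description precedes it below -/
import Mathlib

section
/- Let V be a Hausdorff locally convex topological real vector space, let K ⊆ V be a nonempty compact convex set, and let Φ : K → (−∞, ∞] be convex and lower semicontinuous. Then sup_{x ∈ K} Φ(x) = sup_{x ∈ 𝓔(K)} Φ(x), where 𝓔(K) is the set of extreme points of K. -/
open scoped ENNReal

/-- Extreme points of a set, in the midpoint sense. -/
def midExtremePoints {V : Type*} [AddCommGroup V] [Module ℝ V] (S : Set V) : Set V :=
  {x | x ∈ S ∧ ∀ u ∈ S, ∀ v ∈ S, x = (2⁻¹ : ℝ) • (u + v) → u = x ∧ v = x}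

lemma extremePoints_subset_midExtremePoints {V : Type*} [AddCommGroup V] [Module ℝ V]
    (S : Set V) : S.extremePoints ℝ ⊆ midExtremePoints S := by
  rintro x ⟨hxS, h⟩
  refine ⟨hxS, fun u hu v hv hx => ?_⟩
  refine ⟨h hu hv ⟨2⁻¹, 2⁻¹, by norm_num, by norm_num, by norm_num, ?_⟩,
    h hv hu ⟨2⁻¹, 2⁻¹, by norm_num, by norm_num, by norm_num, ?_⟩⟩
  · rw [← smul_add]; exact hx.symm
  · rw [← smul_add, add_comm]; exact hx.symm

/-- for a convex lower semicontinuous function on a nonempty compact convex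
subset of a Hausdorff locally convex space, the supremum over the set equals the supremum
over its extreme points. -/
theorem stmt6 {V : Type*} [AddCommGroup V] [Module ℝ V] [TopologicalSpace V]
    [IsTopologicalAddGroup V] [ContinuousSMul ℝ V] [T2Space V] [LocallyConvexSpace ℝ V]
    (K : Set V) (hKne : K.Nonempty) (hKcpt : IsCompact K) (hKconv : Convex ℝ K)
    (Φ : V → EReal)
    (hconv : ∀ x ∈ K, ∀ y ∈ K, ∀ a b : ℝ, 0 ≤ a → 0 ≤ b → a + b = 1 →
      Φ (a • x + b • y) ≤ (a : EReal) * Φ x + (b : EReal) * Φ y)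
    (hbot : ∀ x ∈ K, Φ x ≠ ⊥)
    (hlsc : LowerSemicontinuousOn Φ K) :
    (⨆ x ∈ K, Φ x) = ⨆ x ∈ midExtremePoints K, Φ x := by
  set M : EReal := ⨆ x ∈ midExtremePoints K, Φ x with hM
  have hmidK : midExtremePoints K ⊆ K := fun x hx => hx.1
  have hge : M ≤ ⨆ x ∈ K, Φ x := by
    refine iSup₂_le fun x hx => ?_
    exact le_iSup₂ (f := fun x (_ : x ∈ K) => Φ x) x (hmidK hx)
  -- it remains to show every point of K has Φ ≤ M
  have hle : ∀ x ∈ K, Φ x ≤ M := by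
    rcases eq_or_ne M ⊤ with hMtop | hMtop
    · intro x _; rw [hMtop]; exact le_top
    · -- M is a real number
      obtain ⟨e, he⟩ := hKcpt.extremePoints_nonempty hKne
      have heMid : e ∈ midExtremePoints K := extremePoints_subset_midExtremePoints K he
      have heM : Φ e ≤ M := le_iSup₂ (f := fun x (_ : x ∈ midExtremePoints K) => Φ x) e heMid
      have hMbot : M ≠ ⊥ := fun h => hbot e (hmidK heMid) (le_antisymm (h ▸ heM) bot_le)
      lift M to ℝ using ⟨hMtop, hMbot⟩ with m hm
      -- the sublevel set
      set C : Set V := {x ∈ K | Φ x ≤ (m : EReal)} with hC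
      have hCK : C ⊆ K := fun x hx => hx.1
      have hCclosed : IsClosed C := by
        rw [← closure_subset_iff_isClosed]
        intro x hx
        have hxK : x ∈ K := by
          have : closure C ⊆ K := closure_minimal hCK hKcpt.isClosed
          exact this hx
        refine ⟨hxK, ?_⟩
        by_contra hlt
        push_neg at hlt
        have hev : ∀ᶠ x' in nhdsWithin x K, (m : EReal) < Φ x' := hlsc x hxK (m : EReal) hlt
        have hne : (nhdsWithin x C).NeBot := mem_closure_iff_nhdsWithin_neBot.1 hx
        have hev' : ∀ᶠ x' in nhdsWithin x C, (m : EReal) < Φ x' :=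
          (nhdsWithin_mono x hCK) hev
        obtain ⟨x', hx'lt, hx'C⟩ := (hev'.and self_mem_nhdsWithin).exists
        exact absurd hx'C.2 (not_le.2 hx'lt)
      have hCconv : Convex ℝ C := by
        intro x hx y hy a b ha hb hab
        refine ⟨hKconv hx.1 hy.1 ha hb hab, ?_⟩
        rcases eq_or_lt_of_le ha with ha0 | ha0
        · have hb1 : b = 1 := by linarith
          simp only [← ha0, hb1, zero_smul, one_smul, zero_add]
          exact hy.2
        rcases eq_or_lt_of_le hb with hb0 | hb0
        · have ha1 : a = 1 := by linarith
          simp only [← hb0, ha1, zero_smul, one_smul, add_zero]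
          exact hx.2
        · have hxt : Φ x ≠ ⊤ := fun h => by
            have h2 := hx.2; rw [h] at h2; exact absurd h2 (by simp)
          have hyt : Φ y ≠ ⊤ := fun h => by
            have h2 := hy.2; rw [h] at h2; exact absurd h2 (by simp)
          obtain ⟨px, hpx⟩ : ∃ p : ℝ, Φ x = (p : EReal) :=
            ⟨(Φ x).toReal, (EReal.coe_toReal hxt (hbot x hx.1)).symm⟩
          obtain ⟨py, hpy⟩ : ∃ p : ℝ, Φ y = (p : EReal) :=
            ⟨(Φ y).toReal, (EReal.coe_toReal hyt (hbot y hy.1)).symm⟩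
          have hpxm : px ≤ m := by
            have := hx.2; rw [hpx] at this; exact_mod_cast this
          have hpym : py ≤ m := by
            have := hy.2; rw [hpy] at this; exact_mod_cast this
          calc Φ (a • x + b • y) ≤ (a : EReal) * Φ x + (b : EReal) * Φ y :=
                hconv x hx.1 y hy.1 a b ha hb hab
            _ = ((a * px + b * py : ℝ) : EReal) := by
                rw [hpx, hpy]; push_cast; ring_nf
            _ ≤ (m : EReal) := by
                have : a * px + b * py ≤ m := by
                  have h3 : a * m + b * m = m := by rw [← add_mul, hab, one_mul]
                  nlinarith [mul_le_mul_of_nonneg_left hpxm ha,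
                    mul_le_mul_of_nonneg_left hpym hb]
                exact_mod_cast this
      -- K ⊆ C via Krein–Milman
      have hEC : K.extremePoints ℝ ⊆ C := by
        intro x hx
        refine ⟨hx.1, ?_⟩
        have := le_iSup₂ (f := fun x (_ : x ∈ midExtremePoints K) => Φ x) x
          (extremePoints_subset_midExtremePoints K hx)
        exact this.trans hM.ge
      have hKC : K ⊆ C := by
        rw [← closure_convexHull_extremePoints hKcpt hKconv]
        exact closure_minimal (convexHull_min hEC hCconv) hCclosed
      intro x hxK
      exact (hKC hxK).2
  exact le_antisymm (iSup₂_le hle) hge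
end

section
/- Let E be a Polish space equipped with a regular σ-finite Borel measure α. Then the map M : 𝒫(E) → [0,∞] defined by M(μ) = sup{μ(A)/α(A) : A Borel with α(A) > 0} is lower semicontinuous with respect to the weak-* topology: if μ_β → μ weakly then M(μ) ≤ liminf_β M(μ_β). -/
open MeasureTheory Filter
open scoped ENNReal

noncomputable def Mmax {E : Type*} [MeasurableSpace E] (α μ : Measure E) : ℝ≥0∞ :=
  ⨆ (A : Set E) (_ : MeasurableSet A) (_ : 0 < α A), μ A / α A

/-- The maximal function equals the supremum over open sets when `α` is outer regular. -/
lemma Mmax_eq_open {E : Type*} [MeasurableSpace E] [TopologicalSpace E] [OpensMeasurableSpace E]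
    (α μ : Measure E) [α.OuterRegular] :
    Mmax α μ = ⨆ (U : Set E) (_ : IsOpen U) (_ : 0 < α U), μ U / α U := by
  apply le_antisymm
  · refine iSup_le fun A => iSup_le fun _hA => iSup_le fun hαA => ?_
    set S : ℝ≥0∞ := ⨆ (U : Set E) (_ : IsOpen U) (_ : 0 < α U), μ U / α U with hS
    rcases eq_or_ne (α A) ⊤ with htop | htop
    · simp [htop]
    rcases eq_or_ne S ⊤ with hStop | hStop
    · simp [hStop]
    -- key: μ A ≤ S * α A
    have key : μ A ≤ S * α A := by
      refine ENNReal.le_of_forall_pos_le_add fun ε hε hlt => ?_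
      rcases eq_or_ne S 0 with hS0 | hS0
      · -- take any open U ⊇ A with finite measure; then μ A ≤ (μ U / α U) * α U ≤ S * αU = 0?
        obtain ⟨U, hAU, hUopen, hU⟩ := A.exists_isOpen_lt_of_lt (α A + ε) (by
          exact ENNReal.lt_add_right htop (by exact_mod_cast hε.ne'))
        have hαU : 0 < α U := hαA.trans_le (measure_mono hAU)
        have h1 : μ U / α U ≤ S := le_iSup_of_le U (le_iSup_of_le hUopen (le_iSup_of_le hαU le_rfl))
        have h2 : μ U = μ U / α U * α U :=
          (ENNReal.div_mul_cancel hαU.ne' hU.ne_top).symm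
        calc μ A ≤ μ U := measure_mono hAU
          _ = μ U / α U * α U := h2
          _ ≤ S * α U := mul_le_mul_left h1 _
          _ = 0 := by rw [hS0, zero_mul]
          _ ≤ S * α A + ε := le_add_left zero_le
      · -- choose U ⊇ A open with α U < α A + ε / S
        have hεS : (0 : ℝ≥0∞) < ε / S := ENNReal.div_pos (by exact_mod_cast hε.ne') hStop
        obtain ⟨U, hAU, hUopen, hU⟩ := A.exists_isOpen_lt_of_lt (α A + ε / S)
          (ENNReal.lt_add_right htop hεS.ne')
        have hαU : 0 < α U := hαA.trans_le (measure_mono hAU)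
        have h1 : μ U / α U ≤ S := le_iSup_of_le U (le_iSup_of_le hUopen (le_iSup_of_le hαU le_rfl))
        have h2 : μ U = μ U / α U * α U :=
          (ENNReal.div_mul_cancel hαU.ne' hU.ne_top).symm
        calc μ A ≤ μ U := measure_mono hAU
          _ = μ U / α U * α U := h2
          _ ≤ S * α U := mul_le_mul_left h1 _
          _ ≤ S * (α A + ε / S) := mul_le_mul_right hU.le _
          _ = S * α A + S * (ε / S) := mul_add _ _ _
          _ = S * α A + ε := by
              rw [ENNReal.mul_div_cancel hS0 hStop]
    rw [ENNReal.div_le_iff hαA.ne' htop]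
    exact key
  · refine iSup_le fun U => iSup_le fun hU => iSup_le fun hαU => ?_
    exact le_iSup_of_le U (le_iSup_of_le hU.measurableSet (le_iSup_of_le hαU le_rfl))

/-- the maximal function `M` is lower semicontinuous on the space of Borel
probability measures with the topology of weak convergence. -/
theorem stmt7 {E : Type*} [MeasurableSpace E] [TopologicalSpace E] [PolishSpace E]
    [BorelSpace E] (α : Measure E) [SigmaFinite α] [α.InnerRegular] [α.OuterRegular] :
    LowerSemicontinuous (fun μ : ProbabilityMeasure E => Mmax α μ.toMeasure) := by
  letI := TopologicalSpace.upgradeIsCompletelyMetrizable E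
  have hrw : (fun μ : ProbabilityMeasure E => Mmax α μ.toMeasure)
      = fun μ : ProbabilityMeasure E =>
        ⨆ (U : Set E) (_ : IsOpen U) (_ : 0 < α U), μ.toMeasure U / α U := by
    funext μ
    exact Mmax_eq_open α μ.toMeasure
  rw [hrw]
  apply lowerSemicontinuous_iSup
  intro U
  apply lowerSemicontinuous_iSup
  intro hU
  apply lowerSemicontinuous_iSup
  intro hαU
  -- μ ↦ μ U is lower semicontinuous for U open, by portmanteau
  have hlsc : LowerSemicontinuous fun μ : ProbabilityMeasure E => μ.toMeasure U := by
    rw [lowerSemicontinuous_iff_le_liminf]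
    intro μ
    exact ProbabilityMeasure.le_liminf_measure_open_of_tendsto tendsto_id hU
  exact (ENNReal.continuous_div_const (α U) hαU.ne').comp_lowerSemicontinuous hlsc
    (fun x y hxy => ENNReal.div_le_div_right hxy _)
end

section
/- Let E be a Polish space with a regular σ-finite Borel measure α and let m ∈ (0,∞]. For any subset S ⊆ E, the set 𝒫_m(S) is convex; and for any compact subset K ⊆ E, the set 𝒫_m(K) is compact in the weak-* topology. -/
open MeasureTheory
open scoped ENNReal

section Aux

set_option linter.unusedSectionVars false

open Filter Topology Set TopologicalSpace BoundedContinuousFunction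
open scoped NNReal

lemma Mmax_le_iff {E : Type*} [MeasurableSpace E] {α μ : Measure E} {m : ℝ≥0∞} (hm : m ≠ 0) :
    Mmax α μ ≤ m ↔ ∀ A : Set E, MeasurableSet A → 0 < α A → μ A ≤ m * α A := by
  unfold Mmax
  rw [iSup_le_iff]
  refine forall_congr' fun A => ?_
  rw [iSup_le_iff]
  refine forall_congr' fun hA => ?_
  rw [iSup_le_iff]
  refine forall_congr' fun h0 => ?_
  rw [ENNReal.div_le_iff_le_mul (Or.inl h0.ne') (Or.inr hm)]


variable {E : Type*} [MetricSpace E] [SecondCountableTopology E]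
  [MeasurableSpace E] [BorelSpace E]

/-- bounded continuous ℝ≥0 function from a continuous function with values in `[0, M]`. -/
noncomputable def mkBCNN (h : E → ℝ≥0) (hc : Continuous h) (M : ℝ≥0) (hM : ∀ x, h x ≤ M) :
    E →ᵇ ℝ≥0 where
  toFun := h
  continuous_toFun := hc
  map_bounded' := by
    refine ⟨M, fun x y => ?_⟩
    rw [NNReal.dist_eq]
    rw [abs_sub_le_iff]
    constructor
    · calc (h x : ℝ) - h y ≤ (h x : ℝ) := by simp [(h y).coe_nonneg]
        _ ≤ M := hM x
    · calc (h y : ℝ) - h x ≤ (h y : ℝ) := by simp [(h x).coe_nonneg]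
        _ ≤ M := hM y

@[simp] lemma mkBCNN_apply (h : E → ℝ≥0) (hc : Continuous h) (M : ℝ≥0) (hM : ∀ x, h x ≤ M)
    (x : E) : mkBCNN h hc M hM x = h x := rfl

variable (Λ : (E →ᵇ ℝ≥0) →ₗ[ℝ≥0] ℝ≥0) in
/-- Riesz content for bounded continuous functions (the older Mathlib version). -/
noncomputable def rieszContentAuxB : Compacts E → ℝ≥0 := fun K =>
  sInf (Λ '' { f : E →ᵇ ℝ≥0 | ∀ x ∈ K, (1 : ℝ≥0) ≤ f x })

lemma rieszContentAuxB_image_nonempty (Λ : (E →ᵇ ℝ≥0) →ₗ[ℝ≥0] ℝ≥0) (K : Compacts E) :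
    (Λ '' { f : E →ᵇ ℝ≥0 | ∀ x ∈ K, (1 : ℝ≥0) ≤ f x }).Nonempty := by
  rw [image_nonempty]
  use (1 : E →ᵇ ℝ≥0)
  intro x _
  simp

lemma rieszContentAuxB_mono (Λ : (E →ᵇ ℝ≥0) →ₗ[ℝ≥0] ℝ≥0) {K₁ K₂ : Compacts E} (h : K₁ ≤ K₂) :
    rieszContentAuxB Λ K₁ ≤ rieszContentAuxB Λ K₂ :=
  csInf_le_csInf (OrderBot.bddBelow _) (rieszContentAuxB_image_nonempty Λ K₂)
    (image_mono (setOf_subset_setOf.mpr fun _ f_hyp x x_in_K₁ => f_hyp x (h x_in_K₁)))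

lemma rieszContentAuxB_le (Λ : (E →ᵇ ℝ≥0) →ₗ[ℝ≥0] ℝ≥0) {K : Compacts E} {f : E →ᵇ ℝ≥0}
    (h : ∀ x ∈ K, (1 : ℝ≥0) ≤ f x) : rieszContentAuxB Λ K ≤ Λ f :=
  csInf_le (OrderBot.bddBelow _) ⟨f, ⟨h, rfl⟩⟩

lemma exists_lt_rieszContentAuxB_add_pos (Λ : (E →ᵇ ℝ≥0) →ₗ[ℝ≥0] ℝ≥0) (K : Compacts E)
    {ε : ℝ≥0} (εpos : 0 < ε) :
    ∃ f : E →ᵇ ℝ≥0, (∀ x ∈ K, (1 : ℝ≥0) ≤ f x) ∧ Λ f < rieszContentAuxB Λ K + ε := by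
  obtain ⟨α, ⟨⟨f, f_hyp⟩, α_hyp⟩⟩ :=
    exists_lt_of_csInf_lt (rieszContentAuxB_image_nonempty Λ K)
      (lt_add_of_pos_right (rieszContentAuxB Λ K) εpos)
  refine ⟨f, f_hyp.left, ?_⟩
  rw [f_hyp.right]
  exact α_hyp

lemma rieszContentAuxB_sup_le (Λ : (E →ᵇ ℝ≥0) →ₗ[ℝ≥0] ℝ≥0) (K1 K2 : Compacts E) :
    rieszContentAuxB Λ (K1 ⊔ K2) ≤ rieszContentAuxB Λ K1 + rieszContentAuxB Λ K2 := by
  apply _root_.le_of_forall_pos_le_add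
  intro ε εpos
  obtain ⟨f1, hf1⟩ := exists_lt_rieszContentAuxB_add_pos Λ K1 (half_pos εpos)
  obtain ⟨f2, hf2⟩ := exists_lt_rieszContentAuxB_add_pos Λ K2 (half_pos εpos)
  have hu : ∀ x ∈ K1 ⊔ K2, (1 : ℝ≥0) ≤ (f1 + f2) x := by
    rintro x (x_in_K1 | x_in_K2)
    · exact le_add_right (hf1.left x x_in_K1)
    · exact le_add_left (hf2.left x x_in_K2)
  apply (rieszContentAuxB_le Λ hu).trans (le_of_lt _)
  rw [map_add]
  apply lt_of_lt_of_le (_root_.add_lt_add hf1.right hf2.right) (le_of_eq _)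
  rw [add_assoc, add_comm (ε / 2), add_assoc, add_halves ε, add_assoc]

/-- The Riesz content of a linear functional is additive on disjoint compacts. -/
lemma rieszContentAux_sup_disjoint (Λ : (E →ᵇ ℝ≥0) →ₗ[ℝ≥0] ℝ≥0) (K₁ K₂ : Compacts E)
    (hd : Disjoint (K₁ : Set E) (K₂ : Set E)) :
    rieszContentAuxB Λ (K₁ ⊔ K₂) = rieszContentAuxB Λ K₁ + rieszContentAuxB Λ K₂ := by
  refine le_antisymm (rieszContentAuxB_sup_le Λ K₁ K₂) ?_
  apply le_csInf (rieszContentAuxB_image_nonempty Λ (K₁ ⊔ K₂))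
  rintro b ⟨f, hf, rfl⟩
  obtain ⟨g, hg0, hg1, hg01⟩ := exists_continuous_zero_one_of_isClosed
    K₂.isCompact.isClosed K₁.isCompact.isClosed hd.symm
  set gnn : E → ℝ≥0 := fun x => Real.toNNReal (g x) with hgnn
  have gnnc : Continuous gnn := continuous_real_toNNReal.comp g.continuous
  have gnn1 : ∀ x, gnn x ≤ 1 := fun x => by
    simp only [hgnn]
    exact Real.toNNReal_le_one.mpr (hg01 x).2
  have hfb : ∃ M : ℝ≥0, ∀ x, f x ≤ M := by
    rcases isEmpty_or_nonempty E with hE | hE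
    · exact ⟨0, fun x => (IsEmpty.false x).elim⟩
    obtain ⟨x₀⟩ := hE
    obtain ⟨C, hC⟩ := f.map_bounded'
    replace hC : ∀ x y : E, dist (f x) (f y) ≤ C := hC
    refine ⟨f x₀ + Real.toNNReal C, fun x => ?_⟩
    have := hC x x₀
    rw [NNReal.dist_eq] at this
    have h1 : (f x : ℝ) ≤ (f x₀ : ℝ) + C := by
      have := abs_sub_le_iff.mp this
      linarith [this.1]
    have h2 : (f x : ℝ) ≤ (f x₀ : ℝ) + Real.toNNReal C :=
      h1.trans (by gcongr; exact Real.le_coe_toNNReal C)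
    exact_mod_cast h2
  obtain ⟨M, hM⟩ := hfb
  set f₁ : E →ᵇ ℝ≥0 := mkBCNN (fun x => f x * gnn x) (f.continuous.mul gnnc) M
    (fun x => le_trans (mul_le_mul_right (gnn1 x) _) (by simpa using hM x)) with hf₁
  set f₂ : E →ᵇ ℝ≥0 := mkBCNN (fun x => f x * (1 - gnn x)) (f.continuous.mul
    (continuous_const.sub gnnc)) M
    (fun x => le_trans (mul_le_mul_right tsub_le_self _) (by simpa using hM x)) with hf₂
  have hsum : ∀ x, f₁ x + f₂ x = f x := fun x => by
    show f x * gnn x + f x * (1 - gnn x) = f x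
    rw [← mul_add, add_tsub_cancel_of_le (gnn1 x), mul_one]
  have key : Λ f₁ + Λ f₂ = Λ f := by
    rw [← map_add]
    congr 1
    ext x
    rw [BoundedContinuousFunction.add_apply]
    exact_mod_cast hsum x
  have h₁ : ∀ x ∈ K₁, (1 : ℝ≥0) ≤ f₁ x := by
    intro x hx
    have hgx : gnn x = 1 := by
      simp only [hgnn]
      rw [hg1 hx]
      simp
    show (1 : ℝ≥0) ≤ f x * gnn x
    rw [hgx, mul_one]
    exact hf x (Or.inl hx)
  have h₂ : ∀ x ∈ K₂, (1 : ℝ≥0) ≤ f₂ x := by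
    intro x hx
    have hgx : gnn x = 0 := by
      simp only [hgnn]
      rw [hg0 hx]
      simp
    show (1 : ℝ≥0) ≤ f x * (1 - gnn x)
    rw [hgx, tsub_zero, mul_one]
    exact hf x (Or.inr hx)
  calc rieszContentAuxB Λ K₁ + rieszContentAuxB Λ K₂ ≤ Λ f₁ + Λ f₂ :=
        add_le_add (rieszContentAuxB_le Λ h₁) (rieszContentAuxB_le Λ h₂)
    _ = Λ f := key


/-- The content coming from a positive linear functional. -/
noncomputable def rieszContentNN (Λ : (E →ᵇ ℝ≥0) →ₗ[ℝ≥0] ℝ≥0) : Content E where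
  toFun := rieszContentAuxB Λ
  mono' := fun _ _ h => rieszContentAuxB_mono Λ h
  sup_disjoint' := fun K₁ K₂ hd _ _ => rieszContentAux_sup_disjoint Λ K₁ K₂ hd
  sup_le' := rieszContentAuxB_sup_le Λ

open TopologicalSpace in
/-- Prokhorov-type theorem: a sequence of probability measures supported on a fixed
compact set has a weakly convergent subsequence, whose limit moreover satisfies the
open-set liminf inequality along the subsequence. -/
lemma exists_subseq_tendsto_of_support (K : Set E) (hK : IsCompact K)
    (μs : ℕ → ProbabilityMeasure E) (hsupp : ∀ n, (μs n : Measure E) Kᶜ = 0) :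
    ∃ (ν : ProbabilityMeasure E) (φ : ℕ → ℕ), StrictMono φ ∧
      Tendsto (fun j => μs (φ j)) atTop (𝓝 ν) ∧ (ν : Measure E) Kᶜ = 0 ∧
      ∀ U : Set E, IsOpen U →
        (ν : Measure E) U ≤ atTop.liminf fun j => (μs (φ j) : Measure E) U := by
  classical
  haveI : Countable ↥(countableBasis E) := (countable_countableBasis E).to_subtype
  set B := countableBasis E with hB
  -- finite unions of basis elements
  set J : Finset ↥B → Set E := fun s => ⋃ W ∈ s, (W : Set E) with hJ
  have hJopen : ∀ s, IsOpen (J s) := fun s =>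
    isOpen_biUnion (fun W _ => isOpen_of_mem_countableBasis W.2)
  -- diagonal extraction
  set g : ℕ → (Finset ↥B → ℝ≥0) := fun n s => μs n (J s) with hg
  have hg_mem : ∀ n, g n ∈ Set.univ.pi fun _ : Finset ↥B => Icc (0:ℝ≥0) 1 :=
    fun n s _ => ⟨zero_le, (μs n).apply_le_one _⟩
  obtain ⟨ℓ, -, φ, hφ, hconv⟩ :=
    (isCompact_univ_pi fun _ : Finset ↥B => isCompact_Icc).tendsto_subseq hg_mem
  have hconv' : ∀ s, Tendsto (fun j => μs (φ j) (J s)) atTop (𝓝 (ℓ s)) := by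
    intro s
    exact (tendsto_pi_nhds.mp hconv) s
  -- ultrafilter limit functional
  set F : Ultrafilter ℕ := Ultrafilter.of atTop with hF'
  have hF : (F : Filter ℕ) ≤ atTop := Ultrafilter.of_le atTop
  set T : ℕ → (E →ᵇ ℝ≥0) → ℝ≥0 := fun j => (μs (φ j)).toFiniteMeasure.testAgainstNN with hT
  have hbound : ∀ (f : E →ᵇ ℝ≥0), ∃ M : ℝ≥0, ∀ x, f x ≤ M := by
    intro f
    rcases isEmpty_or_nonempty E with hE | hE
    · exact ⟨0, fun x => (IsEmpty.false x).elim⟩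
    obtain ⟨x₀⟩ := hE
    obtain ⟨C, hC⟩ := f.map_bounded'
    replace hC : ∀ x y : E, dist (f x) (f y) ≤ C := hC
    refine ⟨f x₀ + Real.toNNReal C, fun x => ?_⟩
    have h0 := hC x x₀
    rw [NNReal.dist_eq] at h0
    have h1 : (f x : ℝ) ≤ (f x₀ : ℝ) + C := by
      have := abs_sub_le_iff.mp h0
      linarith [this.1]
    have h2 : (f x : ℝ) ≤ (f x₀ : ℝ) + Real.toNNReal C :=
      h1.trans (by gcongr; exact Real.le_coe_toNNReal C)
    exact_mod_cast h2
  have hex : ∀ f : E →ᵇ ℝ≥0, ∃ x : ℝ≥0, Tendsto (fun j => T j f) (F : Filter ℕ) (𝓝 x) := by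
    intro f
    obtain ⟨M, hM⟩ := hbound f
    have hmem : ∀ j, T j f ∈ Icc (0 : ℝ≥0) M := by
      intro j
      refine ⟨zero_le, ?_⟩
      calc T j f ≤ (μs (φ j)).toFiniteMeasure.testAgainstNN (BoundedContinuousFunction.const E M) :=
            FiniteMeasure.testAgainstNN_mono _ (fun x => by simpa using hM x)
        _ = M * (μs (φ j)).toFiniteMeasure.mass := FiniteMeasure.testAgainstNN_const _ M
        _ = M := by rw [(μs (φ j)).mass_toFiniteMeasure, mul_one]
    obtain ⟨x, -, hx⟩ := isCompact_Icc.ultrafilter_le_nhds (F.map fun j => T j f)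
      (by
        refine Filter.le_principal_iff.mpr ?_
        exact Filter.mem_map.mpr (Filter.univ_mem' hmem))
    exact ⟨x, hx⟩
  choose Λ₀ hΛ₀ using hex
  have hadd : ∀ f₁ f₂ : E →ᵇ ℝ≥0, Λ₀ (f₁ + f₂) = Λ₀ f₁ + Λ₀ f₂ := by
    intro f₁ f₂
    refine tendsto_nhds_unique (hΛ₀ (f₁ + f₂)) ?_
    have : (fun j => T j (f₁ + f₂)) = fun j => T j f₁ + T j f₂ := by
      funext j
      exact FiniteMeasure.testAgainstNN_add _ f₁ f₂
    rw [this]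
    exact (hΛ₀ f₁).add (hΛ₀ f₂)
  have hsmul : ∀ (c : ℝ≥0) (f : E →ᵇ ℝ≥0), Λ₀ (c • f) = c • Λ₀ f := by
    intro c f
    refine tendsto_nhds_unique (hΛ₀ (c • f)) ?_
    have : (fun j => T j (c • f)) = fun j => c * T j f := by
      funext j
      show (μs (φ j)).toFiniteMeasure.testAgainstNN (c • f) = c * _
      rw [FiniteMeasure.testAgainstNN_smul]
      rfl
    rw [this]
    simpa [smul_eq_mul] using (hΛ₀ f).const_mul c
  set Λ : (E →ᵇ ℝ≥0) →ₗ[ℝ≥0] ℝ≥0 :=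
    { toFun := Λ₀, map_add' := hadd, map_smul' := hsmul } with hΛdef
  have hΛapp : ∀ f, Λ f = Λ₀ f := fun f => rfl
  set 𝒞 : Content E := rieszContentNN Λ with h𝒞
  set ν₀ : Measure E := 𝒞.measure with hν₀
  -- value of Λ at 1
  have hΛ1 : Λ₀ 1 = 1 := by
    refine tendsto_nhds_unique (hΛ₀ 1) ?_
    have : (fun j => T j 1) = fun _ => (1 : ℝ≥0) := by
      funext j
      rw [hT]
      simp [FiniteMeasure.testAgainstNN_one, (μs (φ j)).mass_toFiniteMeasure]
    rw [this]
    exact tendsto_const_nhds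
  -- the content is at most 1
  have hlamle1 : ∀ Kc : Compacts E, rieszContentAuxB Λ Kc ≤ 1 := by
    intro Kc
    have h1 : ∀ x ∈ (Kc : Set E), (1 : ℝ≥0) ≤ (1 : E →ᵇ ℝ≥0) x := fun x _ => by simp
    have h2 := rieszContentAuxB_le Λ h1
    rwa [hΛapp, hΛ1] at h2
  -- key liminf bound for compacts inside opens
  have key : ∀ (Kc : Compacts E) (U : Set E), IsOpen U → (Kc : Set E) ⊆ U →
      (rieszContentAuxB Λ Kc : ℝ≥0∞) ≤ atTop.liminf fun j => (μs (φ j) : Measure E) U := by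
    intro Kc U hU hKU
    have cover : ∀ x ∈ (Kc : Set E), ∃ W : ↥B, x ∈ (W : Set E) ∧ closure (W : Set E) ⊆ U := by
      intro x hx
      obtain ⟨r, hr, hball⟩ := Metric.isOpen_iff.mp hU x (hKU hx)
      obtain ⟨W, hWB, hxW, hWsub⟩ := (isBasis_countableBasis E).exists_subset_of_mem_open
        (Metric.mem_ball_self (half_pos hr)) Metric.isOpen_ball
      refine ⟨⟨W, hWB⟩, hxW, ?_⟩
      refine subset_trans (closure_mono hWsub) ?_
      refine subset_trans Metric.closure_ball_subset_closedBall ?_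
      exact subset_trans (Metric.closedBall_subset_ball (by linarith)) hball
    set pty : ↥B → Set E := fun W => if closure (W : Set E) ⊆ U then (W : Set E) else ∅ with hpty
    have hptyopen : ∀ W, IsOpen (pty W) := by
      intro W
      by_cases h : closure (W : Set E) ⊆ U
      · simpa [hpty, h] using isOpen_of_mem_countableBasis W.2
      · simp [hpty, h]
    have hptycover : (Kc : Set E) ⊆ ⋃ W, pty W := by
      intro x hx
      obtain ⟨W, hxW, hWsub⟩ := cover x hx
      exact mem_iUnion.mpr ⟨W, by simp [hpty, hWsub, hxW]⟩
    obtain ⟨t, ht⟩ := Kc.isCompact.elim_finite_subcover pty hptyopen hptycover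
    set t' : Finset ↥B := t.filter (fun W => closure (W : Set E) ⊆ U) with ht'
    have hKJ : (Kc : Set E) ⊆ J t' := by
      intro x hx
      obtain ⟨W, hWt, hxW⟩ := mem_iUnion₂.mp (ht hx)
      by_cases h : closure (W : Set E) ⊆ U
      · exact mem_iUnion₂.mpr ⟨W, Finset.mem_filter.mpr ⟨hWt, h⟩, by simpa [hpty, h] using hxW⟩
      · simp [hpty, h] at hxW
    have hclJ : closure (J t') ⊆ U := by
      rw [hJ]
      rw [t'.closure_biUnion]
      refine iUnion₂_subset ?_
      intro W hW
      exact (Finset.mem_filter.mp hW).2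
    obtain ⟨u, hu0, hu1, hu01⟩ := exists_continuous_zero_one_of_isClosed
      (isClosed_compl_iff.mpr (hJopen t')) Kc.isCompact.isClosed
      (Set.disjoint_left.mpr fun x hxc hxK => hxc (hKJ hxK))
    set unn : E →ᵇ ℝ≥0 := mkBCNN (fun x => Real.toNNReal (u x))
      (continuous_real_toNNReal.comp u.continuous) 1
      (fun x => Real.toNNReal_le_one.mpr (hu01 x).2) with hunn
    have h1u : ∀ x ∈ (Kc : Set E), (1 : ℝ≥0) ≤ unn x := by
      intro x hx
      show (1 : ℝ≥0) ≤ Real.toNNReal (u x)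
      rw [hu1 hx]
      simp
    have hle1 : rieszContentAuxB Λ Kc ≤ Λ₀ unn := rieszContentAuxB_le Λ h1u
    have hcmp : ∀ j, T j unn ≤ μs (φ j) (J t') := by
      intro j
      have hbnd : ∀ x, (unn x : ℝ≥0∞) ≤ (J t').indicator (fun _ => (1 : ℝ≥0∞)) x := by
        intro x
        by_cases hx : x ∈ J t'
        · rw [indicator_of_mem hx]
          exact_mod_cast (fun _ => Real.toNNReal_le_one.mpr (hu01 x).2) hx
        · have hzero : u x = 0 := hu0 hx
          rw [indicator_of_notMem hx]
          show ((Real.toNNReal (u x) : ℝ≥0) : ℝ≥0∞) ≤ 0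
          simp [hzero]
      have hlin : ∫⁻ x, (unn x : ℝ≥0∞) ∂(μs (φ j) : Measure E)
          ≤ (μs (φ j) : Measure E) (J t') := by
        calc ∫⁻ x, (unn x : ℝ≥0∞) ∂(μs (φ j) : Measure E)
            ≤ ∫⁻ x, (J t').indicator (fun _ => (1 : ℝ≥0∞)) x ∂(μs (φ j) : Measure E) :=
              lintegral_mono hbnd
          _ = (μs (φ j) : Measure E) (J t') := by
              rw [lintegral_indicator (hJopen t').measurableSet]
              simp
      show (μs (φ j)).toFiniteMeasure.testAgainstNN unn ≤ μs (φ j) (J t')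
      rw [← ENNReal.coe_le_coe, FiniteMeasure.testAgainstNN_coe_eq,
        ProbabilityMeasure.ennreal_coeFn_eq_coeFn_toMeasure]
      simpa using hlin
    have hLell : Λ₀ unn ≤ ℓ t' :=
      le_of_tendsto_of_tendsto' (hΛ₀ unn) ((hconv' t').mono_left hF) hcmp
    have htend : Tendsto (fun j => (μs (φ j) : Measure E) (J t')) atTop (𝓝 (ℓ t' : ℝ≥0∞)) := by
      simp_rw [← ProbabilityMeasure.ennreal_coeFn_eq_coeFn_toMeasure]
      exact ENNReal.tendsto_coe.mpr (hconv' t')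
    calc (rieszContentAuxB Λ Kc : ℝ≥0∞) ≤ (Λ₀ unn : ℝ≥0∞) := ENNReal.coe_le_coe.mpr hle1
      _ ≤ (ℓ t' : ℝ≥0∞) := ENNReal.coe_le_coe.mpr hLell
      _ = atTop.liminf (fun j => (μs (φ j) : Measure E) (J t')) := htend.liminf_eq.symm
      _ ≤ atTop.liminf (fun j => (μs (φ j) : Measure E) U) :=
          liminf_le_liminf (Filter.Eventually.of_forall fun j =>
            measure_mono (subset_closure.trans hclJ))
  -- the content of K is at least 1
  have hlamK : (1 : ℝ≥0) ≤ rieszContentAuxB Λ ⟨K, hK⟩ := by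
    refine le_csInf (rieszContentAuxB_image_nonempty Λ ⟨K, hK⟩) ?_
    rintro b ⟨f, hf, rfl⟩
    have hTj : ∀ j, (1 : ℝ≥0) ≤ T j f := by
      intro j
      have hKmeas : (μs (φ j) : Measure E) K = 1 := by
        have h1 := measure_add_measure_compl (μ := (μs (φ j) : Measure E)) hK.measurableSet
        rw [hsupp (φ j), add_zero] at h1
        rw [h1]
        exact measure_univ
      have hlin : (1 : ℝ≥0∞) ≤ ∫⁻ x, (f x : ℝ≥0∞) ∂(μs (φ j) : Measure E) := by
        calc (1 : ℝ≥0∞) = (μs (φ j) : Measure E) K := hKmeas.symm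
          _ = ∫⁻ x, K.indicator (fun _ => (1 : ℝ≥0∞)) x ∂(μs (φ j) : Measure E) := by
              rw [lintegral_indicator hK.measurableSet]
              simp
          _ ≤ ∫⁻ x, (f x : ℝ≥0∞) ∂(μs (φ j) : Measure E) := by
              refine lintegral_mono fun x => ?_
              by_cases hx : x ∈ K
              · rw [indicator_of_mem hx]
                simpa using ENNReal.coe_le_coe.mpr (hf x hx)
              · rw [indicator_of_notMem hx]
                exact zero_le
      show (1 : ℝ≥0) ≤ (μs (φ j)).toFiniteMeasure.testAgainstNN f
      rw [← ENNReal.coe_le_coe, FiniteMeasure.testAgainstNN_coe_eq]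
      simpa using hlin
    exact ge_of_tendsto (hΛ₀ f) (Filter.Eventually.of_forall hTj)
  -- ν₀ is a probability measure concentrated on K
  have hgeK : (1 : ℝ≥0∞) ≤ ν₀ K := by
    calc (1 : ℝ≥0∞) = ((1 : ℝ≥0) : ℝ≥0∞) := by simp
      _ ≤ (rieszContentAuxB Λ ⟨K, hK⟩ : ℝ≥0∞) := ENNReal.coe_le_coe.mpr hlamK
      _ = 𝒞 ⟨K, hK⟩ := rfl
      _ ≤ 𝒞.outerMeasure K := 𝒞.le_outerMeasure_compacts _
      _ = ν₀ K := (𝒞.measure_apply hK.measurableSet).symm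
  have hν₀univ : ν₀ univ = 1 := by
    have hle : ν₀ univ ≤ 1 := by
      rw [hν₀, 𝒞.measure_apply MeasurableSet.univ,
        𝒞.outerMeasure_of_isOpen univ isOpen_univ]
      refine iSup_le fun Kc => iSup_le fun _ => ?_
      show ((rieszContentAuxB Λ Kc : ℝ≥0) : ℝ≥0∞) ≤ 1
      exact_mod_cast hlamle1 Kc
    exact le_antisymm hle (le_trans hgeK (measure_mono (subset_univ K)))
  haveI hprob : IsProbabilityMeasure ν₀ := ⟨hν₀univ⟩
  have hνK : ν₀ K = 1 := le_antisymm (by rw [← hν₀univ]; exact measure_mono (subset_univ K)) hgeK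
  have hνKc : ν₀ Kᶜ = 0 := by
    rw [measure_compl hK.measurableSet (by rw [hνK]; exact ENNReal.one_ne_top), hν₀univ, hνK, tsub_self]
  have hopens : ∀ U : Set E, IsOpen U →
      ν₀ U ≤ atTop.liminf fun j => (μs (φ j) : Measure E) U := by
    intro U hU
    rw [hν₀, 𝒞.measure_apply hU.measurableSet, 𝒞.outerMeasure_of_isOpen U hU]
    exact iSup_le fun Kc => iSup_le fun hKc => key Kc U hU hKc
  set ν : ProbabilityMeasure E := ⟨ν₀, hprob⟩ with hνdef
  have hmain : Tendsto (fun j => μs (φ j)) atTop (𝓝 ν) := by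
    apply MeasureTheory.tendsto_of_forall_isOpen_le_liminf
    intro G hG
    have hop := hopens G hG
    have hb1 : ∀ j, μs (φ j) G ≤ 1 := fun j => (μs (φ j)).apply_le_one G
    have aux : ((atTop.liminf fun j => μs (φ j) G : ℝ≥0) : ℝ≥0∞)
        = atTop.liminf fun j => ((μs (φ j) G : ℝ≥0) : ℝ≥0∞) := by
      refine Monotone.map_liminf_of_continuousAt (F := atTop) ENNReal.coe_mono
        (fun j => μs (φ j) G) ENNReal.continuous_coe.continuousAt ?_ ?_
      · exact Filter.IsBoundedUnder.isCoboundedUnder_ge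
          ⟨1, Filter.eventually_map.mpr (Filter.Eventually.of_forall hb1)⟩
      · exact ⟨0, Filter.eventually_map.mpr (Filter.Eventually.of_forall fun j => zero_le)⟩
    rw [← ENNReal.coe_le_coe, aux]
    simp_rw [ProbabilityMeasure.ennreal_coeFn_eq_coeFn_toMeasure]
    exact hop
  exact ⟨ν, φ, hφ, hmain, hνKc, hopens⟩


end Aux

/-- `𝒫_m(S)`: probability measures supported in `S` with maximal function at most `m`. -/
def Pm {E : Type*} [MeasurableSpace E] [TopologicalSpace E]
    (α : Measure E) (m : ℝ≥0∞) (S : Set E) : Set (ProbabilityMeasure E) :=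
  {μ | Mmax α μ.toMeasure ≤ m ∧ μ.toMeasure Sᶜ = 0}

section MainProof

open Filter Topology Set TopologicalSpace BoundedContinuousFunction
open scoped NNReal

/-- `𝒫_m(S)` is convex for every `S ⊆ E`, and `𝒫_m(K)` is weak-* compact for
every compact `K ⊆ E`. -/
theorem stmt8 {E : Type*} [MeasurableSpace E] [TopologicalSpace E] [PolishSpace E]
    [BorelSpace E] (α : Measure E) [SigmaFinite α] [α.InnerRegular] [α.OuterRegular]
    (m : ℝ≥0∞) (hm : 0 < m) (S : Set E) (K : Set E) (hK : IsCompact K) :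
    (∀ μ ∈ Pm α m S, ∀ ν ∈ Pm α m S, ∀ t : ℝ≥0∞, t ≤ 1 →
      ∀ σ : ProbabilityMeasure E,
        σ.toMeasure = t • μ.toMeasure + (1 - t) • ν.toMeasure → σ ∈ Pm α m S) ∧
    IsCompact (Pm α m K) := by
  have hm0 : m ≠ 0 := hm.ne'
  constructor
  · rintro μ ⟨hμ1, hμ2⟩ ν ⟨hν1, hν2⟩ t ht σ hσ
    constructor
    · rw [Mmax_le_iff hm0]
      intro A hA h0
      have hμA := (Mmax_le_iff hm0).mp hμ1 A hA h0
      have hνA := (Mmax_le_iff hm0).mp hν1 A hA h0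
      rw [hσ, Measure.add_apply, Measure.smul_apply, Measure.smul_apply, smul_eq_mul,
        smul_eq_mul]
      calc t * μ.toMeasure A + (1 - t) * ν.toMeasure A
          ≤ t * (m * α A) + (1 - t) * (m * α A) :=
            add_le_add (mul_le_mul_right hμA t) (mul_le_mul_right hνA _)
        _ = (t + (1 - t)) * (m * α A) := (add_mul _ _ _).symm
        _ = m * α A := by rw [add_tsub_cancel_of_le ht, one_mul]
    · rw [hσ, Measure.add_apply, Measure.smul_apply, Measure.smul_apply, hμ2, hν2]
      simp
  · letI := upgradeIsCompletelyMetrizable E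
    letI : MetricSpace (ProbabilityMeasure E) := TopologicalSpace.metrizableSpaceMetric _
    apply IsSeqCompact.isCompact
    intro μs hμs
    obtain ⟨ρ, φ, hφ, htend, hρKc, hopens⟩ :=
      exists_subseq_tendsto_of_support K hK μs (fun n => (hμs n).2)
    refine ⟨ρ, ⟨?_, hρKc⟩, φ, hφ, htend⟩
    rw [Mmax_le_iff hm0]
    intro A hA h0
    by_cases hminf : m = ∞
    · rw [hminf, ENNReal.top_mul h0.ne']
      exact le_top
    have hUbound : ∀ U : Set E, IsOpen U → A ⊆ U → ρ.toMeasure A ≤ m * α U := by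
      intro U hU hAU
      have h0U : 0 < α U := lt_of_lt_of_le h0 (measure_mono hAU)
      have hj : ∀ j, (μs (φ j) : Measure E) U ≤ m * α U := fun j =>
        (Mmax_le_iff hm0).mp (hμs (φ j)).1 U hU.measurableSet h0U
      calc ρ.toMeasure A ≤ ρ.toMeasure U := measure_mono hAU
        _ ≤ atTop.liminf (fun j => (μs (φ j) : Measure E) U) := hopens U hU
        _ ≤ m * α U := liminf_le_of_frequently_le' (Filter.Frequently.of_forall hj)
    by_cases hαA : α A = ∞
    · rw [hαA, ENNReal.mul_top hm0]
      exact le_top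
    refine ENNReal.le_of_forall_pos_le_add fun ε hε _ => ?_
    have hδ0 : (ε : ℝ≥0∞) / m ≠ 0 := by
      refine ENNReal.div_ne_zero.mpr ⟨?_, hminf⟩
      exact_mod_cast hε.ne'
    obtain ⟨U, hAU, hUopen, hUlt⟩ := Set.exists_isOpen_lt_add A hαA hδ0
    calc ρ.toMeasure A ≤ m * α U := hUbound U hUopen hAU
      _ ≤ m * (α A + ε / m) := mul_le_mul_right hUlt.le m
      _ = m * α A + m * (ε / m) := by rw [mul_add]
      _ ≤ m * α A + ε := add_le_add_right ENNReal.mul_div_le _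

end MainProof
end

section
/- Let T : ℝ^n → ℝ^k be a surjective linear map (1 ≤ k < n), and let A : ℝ^{n−k} → ℝ^n be a linear map whose columns form an orthonormal basis of ker(T). Let f : (ℝ^d)^n → [0,∞) be Lebesgue-integrable with ∫ f = 1. Then the pushforward under T^(d) of the measure f·λ_{nd} (λ_{nd} = Lebesgue measure on (ℝ^d)^n) is absolutely continuous with respect to Lebesgue measure on (ℝ^d)^k, with density g given by g(x) = det(T T^t)^{−d/2} ∫_{(ℝ^d)^{n−k}} f( (T^(d))^t (T^(d) (T^(d))^t)^{−1} x + A^(d) y ) dy. In particular g(0) = det(T T^t)^{−d/2} ∫_{(ℝ^d)^{n−k}} f(A^(d) y) dy. -/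
open MeasureTheory Matrix
open scoped ENNReal NNReal Kronecker

noncomputable section
namespace Stmt13Aux

/-- matrix action on a vector of module elements -/
def matLin {ι κ : Type*} [Fintype κ] (M : Matrix ι κ ℝ) (E : Type*) [AddCommGroup E]
    [Module ℝ E] : (κ → E) →ₗ[ℝ] (ι → E) where
  toFun v i := ∑ j, M i j • v j
  map_add' u v := by funext i; simp [smul_add, Finset.sum_add_distrib]
  map_smul' c v := by
    funext i
    simp only [RingHom.id_apply, Pi.smul_apply, Finset.smul_sum]
    exact Finset.sum_congr rfl fun j _ => (smul_comm c (M i j) (v j)).symm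

@[simp] lemma matLin_apply {ι κ : Type*} [Fintype κ] (M : Matrix ι κ ℝ) {E : Type*}
    [AddCommGroup E] [Module ℝ E] (v : κ → E) (i : ι) :
    matLin M E v i = ∑ j, M i j • v j := rfl

lemma matLin_matLin {ι κ l : Type*} [Fintype κ] [Fintype l] (M : Matrix ι κ ℝ)
    (N : Matrix κ l ℝ) {E : Type*} [AddCommGroup E] [Module ℝ E] (v : l → E) :
    matLin M E (matLin N E v) = matLin (M * N) E v := by
  funext i
  simp only [matLin_apply, Finset.smul_sum, Matrix.mul_apply, Finset.sum_smul, smul_smul]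
  exact Finset.sum_comm

lemma matLin_one {ι : Type*} [Fintype ι] [DecidableEq ι] {E : Type*} [AddCommGroup E]
    [Module ℝ E] (v : ι → E) : matLin (1 : Matrix ι ι ℝ) E v = v := by
  funext i
  simp [matLin_apply, Matrix.one_apply, ite_smul]

lemma matLin_zero {ι κ : Type*} [Fintype κ] {E : Type*} [AddCommGroup E]
    [Module ℝ E] (v : κ → E) : matLin (0 : Matrix ι κ ℝ) E v = 0 := by
  funext i; simp [matLin_apply]

lemma det_matLin {ι : Type*} [Fintype ι] [DecidableEq ι] (N : Matrix ι ι ℝ)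
    (E : Type*) [AddCommGroup E] [Module ℝ E] [Module.Finite ℝ E] [Module.Free ℝ E] :
    LinearMap.det (matLin N E) = N.det ^ (Module.finrank ℝ E) := by
  classical
  set b := Module.finBasis ℝ E
  set dE := Module.finrank ℝ E
  set bb : Module.Basis ((_ : ι) × Fin dE) ℝ (ι → E) := Pi.basis (fun _ : ι => b)
  rw [← LinearMap.det_toMatrix bb]
  have hmat : LinearMap.toMatrix bb bb (matLin N E)
      = (N ⊗ₖ (1 : Matrix (Fin dE) (Fin dE) ℝ)).submatrix
          (Equiv.sigmaEquivProd ι (Fin dE)) (Equiv.sigmaEquivProd ι (Fin dE)) := by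
    ext ⟨i, a⟩ ⟨j, c⟩
    rw [LinearMap.toMatrix_apply]
    have hb : bb ⟨j, c⟩ = Pi.single j (b c) := Pi.basis_apply _ _
    have h1 : matLin N E (bb ⟨j, c⟩) i = N i j • b c := by
      rw [hb, matLin_apply]
      rw [Finset.sum_eq_single j]
      · simp
      · intro j' _ hj'; simp [Pi.single_eq_of_ne hj']
      · simp
    rw [Pi.basis_repr, h1]
    simp [Matrix.submatrix_apply, Matrix.kroneckerMap_apply, Matrix.one_apply,
      Finsupp.single_apply, mul_comm, eq_comm]
  rw [hmat, Matrix.det_submatrix_equiv_self, Matrix.det_kronecker]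
  simp

theorem withDensity_map_eq {α β : Type*} [MeasurableSpace α] [MeasurableSpace β]
    (μ : Measure α) {Φ : α → β} (hΦ : Measurable Φ) {f : β → ℝ≥0∞} (hf : Measurable f) :
    (μ.map Φ).withDensity f = (μ.withDensity (fun a => f (Φ a))).map Φ := by
  ext s hs
  rw [withDensity_apply _ hs, Measure.map_apply hΦ hs, withDensity_apply _ (hΦ hs),
    setLIntegral_map hs hf hΦ]

theorem map_fst_withDensity {α β : Type*} [MeasureSpace α] [MeasureSpace β]
    [SigmaFinite (volume : Measure α)] [SigmaFinite (volume : Measure β)]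
    {h : α × β → ℝ≥0∞} (hh : Measurable h) :
    ((volume : Measure (α × β)).withDensity h).map Prod.fst
      = (volume : Measure α).withDensity (fun x => ∫⁻ y, h (x, y)) := by
  ext s hs
  rw [Measure.map_apply measurable_fst hs, withDensity_apply _ (measurable_fst hs),
    withDensity_apply _ hs]
  have hpre : (Prod.fst ⁻¹' s : Set (α × β)) = s ×ˢ Set.univ := by ext p; simp
  rw [hpre, Measure.volume_eq_prod, ← Measure.restrict_univ (μ := (volume : Measure β)),
    ← Measure.prod_restrict, Measure.restrict_univ, lintegral_prod _ hh.aemeasurable]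

end Stmt13Aux
end

open Stmt13Aux

theorem stmt13 (d n k : ℕ) (hd : 1 ≤ d) (hk1 : 1 ≤ k) (hkn : k < n)
    (T : Matrix (Fin k) (Fin n) ℝ) (hT : Function.Surjective fun v => T.mulVec v)
    (A : Matrix (Fin n) (Fin (n - k)) ℝ) (hA : Aᵀ * A = 1)
    (hker : LinearMap.range A.mulVecLin = LinearMap.ker T.mulVecLin)
    (f : (Fin n → EuclideanSpace ℝ (Fin d)) → ℝ≥0)
    (hfm : Measurable f) (hf1 : ∫⁻ x, (f x : ℝ≥0∞) = 1)
    (g : (Fin k → EuclideanSpace ℝ (Fin d)) → ℝ≥0∞)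
    (hg : g = fun x => ENNReal.ofReal (((T * Tᵀ).det) ^ (-(d : ℝ) / 2)) *
      ∫⁻ y : Fin (n - k) → EuclideanSpace ℝ (Fin d),
        (f (fun j => (∑ i, (Tᵀ * (T * Tᵀ)⁻¹) j i • x i) + ∑ i, A j i • y i) : ℝ≥0∞)) :
    ((volume.withDensity (fun x => (f x : ℝ≥0∞))).map
        (fun x : Fin n → EuclideanSpace ℝ (Fin d) => fun i : Fin k => ∑ j, T i j • x j))
      = volume.withDensity g
    ∧ g 0 = ENNReal.ofReal (((T * Tᵀ).det) ^ (-(d : ℝ) / 2)) *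
        ∫⁻ y : Fin (n - k) → EuclideanSpace ℝ (Fin d),
          (f (fun j => ∑ i, A j i • y i) : ℝ≥0∞) := by
  classical
  have hg0 : g 0 = ENNReal.ofReal (((T * Tᵀ).det) ^ (-(d : ℝ) / 2)) *
      ∫⁻ y : Fin (n - k) → EuclideanSpace ℝ (Fin d),
        (f (fun j => ∑ i, A j i • y i) : ℝ≥0∞) := by
    rw [hg]
    refine congrArg _ (lintegral_congr fun y => ?_)
    congr 2
    funext j
    simp
  refine ⟨?_, hg0⟩
  -- notation
  -- matrix facts
  have hTA : T * A = 0 := by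
    ext i j
    have hmem : A.mulVecLin (Pi.single j 1) ∈ LinearMap.ker T.mulVecLin := by
      rw [← hker]; exact ⟨_, rfl⟩
    have h0 : T *ᵥ (A *ᵥ (Pi.single j 1)) = 0 := hmem
    rw [mulVec_mulVec] at h0
    simpa using congrFun h0 i
  have hTt : ∀ x : Fin k → ℝ, Tᵀ *ᵥ x = 0 → x = 0 := by
    intro x hx
    obtain ⟨u, hu⟩ := hT x
    have hxx : x ⬝ᵥ x = 0 := by
      have h1 : x ⬝ᵥ (T *ᵥ u) = (Tᵀ *ᵥ x) ⬝ᵥ u := by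
        rw [dotProduct_mulVec, ← Matrix.mulVec_transpose]
      have hu' : T *ᵥ u = x := hu
      rw [hu', hx, zero_dotProduct] at h1
      exact h1
    exact dotProduct_self_eq_zero.mp hxx
  have hPD : (T * Tᵀ).PosDef := by
    rw [Matrix.posDef_iff_dotProduct_mulVec]
    constructor
    · show (T * Tᵀ)ᴴ = T * Tᵀ
      rw [Matrix.conjTranspose_eq_transpose_of_trivial, Matrix.transpose_mul,
        Matrix.transpose_transpose]
    · intro x hx
      have hw : (Tᵀ *ᵥ x) ≠ 0 := fun h => hx (hTt x h)
      have h1 : star x ⬝ᵥ ((T * Tᵀ) *ᵥ x) = (Tᵀ *ᵥ x) ⬝ᵥ (Tᵀ *ᵥ x) := by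
        rw [star_trivial, ← mulVec_mulVec, dotProduct_mulVec, ← Matrix.mulVec_transpose]
      rw [h1]
      have h2 : (Tᵀ *ᵥ x) ⬝ᵥ (Tᵀ *ᵥ x) ≠ 0 := fun h => hw (dotProduct_self_eq_zero.mp h)
      exact lt_of_le_of_ne (Finset.sum_nonneg fun i _ => mul_self_nonneg _) (Ne.symm h2)
  have hr : 0 < (T * Tᵀ).det := hPD.det_pos
  have hu : IsUnit (T * Tᵀ).det := isUnit_iff_ne_zero.mpr hr.ne'
  set r : ℝ := (T * Tᵀ).det with hrdef
  set P : Matrix (Fin n) (Fin k) ℝ := Tᵀ * (T * Tᵀ)⁻¹ with hPdef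
  have hRsymm : ((T * Tᵀ)⁻¹)ᵀ = (T * Tᵀ)⁻¹ := by
    rw [Matrix.transpose_nonsing_inv, Matrix.transpose_mul, Matrix.transpose_transpose]
  have hTP : T * P = 1 := by
    rw [hPdef, ← Matrix.mul_assoc]
    exact Matrix.mul_nonsing_inv _ hu
  have hPt : Pᵀ = (T * Tᵀ)⁻¹ * T := by
    rw [hPdef, Matrix.transpose_mul, hRsymm, Matrix.transpose_transpose]
  have hPtP : Pᵀ * P = (T * Tᵀ)⁻¹ := by
    rw [hPt, Matrix.mul_assoc, hTP, Matrix.mul_one]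
  have hPtA : Pᵀ * A = 0 := by
    rw [hPt, Matrix.mul_assoc, hTA, Matrix.mul_zero]
  have hAtP : Aᵀ * P = 0 := by
    rw [hPdef, ← Matrix.mul_assoc, ← Matrix.transpose_mul, hTA, Matrix.transpose_zero,
      Matrix.zero_mul]
  -- reindexing
  have hkn' : k + (n - k) = n := Nat.add_sub_cancel' hkn.le
  set σ : Fin k ⊕ Fin (n - k) ≃ Fin n := finSumFinEquiv.trans (finCongr hkn') with hσdef
  set M : Matrix (Fin n) (Fin k ⊕ Fin (n - k)) ℝ := fromCols P A with hMdef
  set Nb : Matrix (Fin n) (Fin n) ℝ := M.submatrix id σ.symm with hNbdef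
  have hMtM : Mᵀ * M = fromBlocks ((T * Tᵀ)⁻¹) 0 0 1 := by
    rw [hMdef, transpose_fromCols, fromRows_mul_fromCols, hPtP, hPtA, hAtP, hA]
  have hdet2 : Nb.det ^ 2 = r⁻¹ := by
    have h1 : Nbᵀ * Nb = (Mᵀ * M).submatrix σ.symm σ.symm := by
      ext s t
      simp [Matrix.mul_apply, Matrix.submatrix_apply, Matrix.transpose_apply, hNbdef]
    have h2 := congrArg Matrix.det h1
    rw [Matrix.det_mul, Matrix.det_transpose, Matrix.det_submatrix_equiv_self, hMtM,
      Matrix.det_fromBlocks_zero₂₁, Matrix.det_one, mul_one, Matrix.det_nonsing_inv,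
      Ring.inverse_eq_inv'] at h2
    rw [sq]; exact h2
  have hNbne : Nb.det ≠ 0 := by
    intro h
    have h0 : (0 : ℝ) = r⁻¹ := by rw [← hdet2, h]; norm_num
    exact hr.ne' (inv_eq_zero.mp h0.symm)
  -- the linear map Ψ and its determinant
  have hdE : Module.finrank ℝ (EuclideanSpace ℝ (Fin d)) = d := finrank_euclideanSpace_fin
  have hΨdet : LinearMap.det (matLin Nb (EuclideanSpace ℝ (Fin d))) = Nb.det ^ d := by
    rw [det_matLin, hdE]
  have habs : |(LinearMap.det (matLin Nb (EuclideanSpace ℝ (Fin d))))⁻¹| = r ^ ((d : ℝ) / 2) := by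
    have hNbabs : |Nb.det| = (Real.sqrt r)⁻¹ := by
      rw [← Real.sqrt_sq_eq_abs, hdet2, Real.sqrt_inv]
    rw [hΨdet, abs_inv, abs_pow, hNbabs, inv_pow, inv_inv, Real.sqrt_eq_rpow,
      ← Real.rpow_natCast (r ^ ((1:ℝ)/2)) d, ← Real.rpow_mul hr.le,
      show (1:ℝ)/2 * (d:ℝ) = (d:ℝ)/2 by ring]
  -- measurable equivalence between the product space and (Fin n → (EuclideanSpace ℝ (Fin d)))
  set me : ((Fin k → (EuclideanSpace ℝ (Fin d))) × (Fin (n - k) → (EuclideanSpace ℝ (Fin d)))) ≃ᵐ (Fin n → (EuclideanSpace ℝ (Fin d))) :=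
    (MeasurableEquiv.sumPiEquivProdPi (fun _ : Fin k ⊕ Fin (n - k) => (EuclideanSpace ℝ (Fin d)))).symm.trans
      (MeasurableEquiv.piCongrLeft (fun _ : Fin n => (EuclideanSpace ℝ (Fin d))) σ) with hmedef
  have hme : MeasurePreserving me volume volume :=
    (volume_measurePreserving_piCongrLeft (fun _ : Fin n => (EuclideanSpace ℝ (Fin d))) σ).comp
      (volume_measurePreserving_sumPiEquivProdPi_symm (fun _ : Fin k ⊕ Fin (n - k) => (EuclideanSpace ℝ (Fin d))))
  -- the change of variables map
  set Φ : ((Fin k → (EuclideanSpace ℝ (Fin d))) × (Fin (n - k) → (EuclideanSpace ℝ (Fin d)))) → (Fin n → (EuclideanSpace ℝ (Fin d))) :=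
    fun p => fun j => (∑ i, P j i • p.1 i) + ∑ i, A j i • p.2 i with hΦdef
  have hΦalt : ∀ p, Φ p = matLin P (EuclideanSpace ℝ (Fin d)) p.1 + matLin A (EuclideanSpace ℝ (Fin d)) p.2 := by
    intro p; funext j; simp [hΦdef]
  have hΦcont : Continuous Φ := by
    have h1 : Continuous fun p : ((Fin k → (EuclideanSpace ℝ (Fin d))) × (Fin (n - k) → (EuclideanSpace ℝ (Fin d)))) => matLin P (EuclideanSpace ℝ (Fin d)) p.1 :=
      (matLin P (EuclideanSpace ℝ (Fin d))).continuous_of_finiteDimensional.comp continuous_fst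
    have h2 : Continuous fun p : ((Fin k → (EuclideanSpace ℝ (Fin d))) × (Fin (n - k) → (EuclideanSpace ℝ (Fin d)))) => matLin A (EuclideanSpace ℝ (Fin d)) p.2 :=
      (matLin A (EuclideanSpace ℝ (Fin d))).continuous_of_finiteDimensional.comp continuous_snd
    exact (funext hΦalt : Φ = _) ▸ (h1.add h2)
  have hΦm : Measurable Φ := hΦcont.measurable
  have hΨm : Measurable (matLin Nb (EuclideanSpace ℝ (Fin d))) :=
    (matLin Nb (EuclideanSpace ℝ (Fin d))).continuous_of_finiteDimensional.measurable
  -- Φ ∘ me.symm = matLin Nb (EuclideanSpace ℝ (Fin d))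
  have hcomp : Φ ∘ ⇑me.symm = ⇑(matLin Nb (EuclideanSpace ℝ (Fin d))) := by
    funext z
    have hsymm : (⇑me.symm) z
        = ((fun i => z (σ (Sum.inl i))), (fun i => z (σ (Sum.inr i)))) := by
      rfl
    rw [Function.comp_apply, hsymm]
    funext j
    rw [matLin_apply]
    rw [← Equiv.sum_comp σ (fun i => Nb j i • z i)]
    simp only [hNbdef, Matrix.submatrix_apply, id_eq, Equiv.symm_apply_apply]
    rw [Fintype.sum_sum_type]
    simp [hΦdef, hMdef, Matrix.fromCols]
  -- pushforward of volume under Ψ = matLin Nb (EuclideanSpace ℝ (Fin d))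
  haveI hHaar : (volume : Measure (Fin n → (EuclideanSpace ℝ (Fin d)))).IsAddHaarMeasure :=
    { toIsFiniteMeasureOnCompacts := inferInstance,
      toIsAddLeftInvariant := inferInstance,
      toIsOpenPosMeasure := inferInstance }
  have hmapΨ : (volume : Measure (Fin n → (EuclideanSpace ℝ (Fin d)))).map (matLin Nb (EuclideanSpace ℝ (Fin d)))
      = ENNReal.ofReal (r ^ ((d : ℝ) / 2)) • volume := by
    rw [Measure.map_linearMap_addHaar_eq_smul_addHaar _
      (by rw [hΨdet]; exact pow_ne_zero _ hNbne), habs]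
  have hmapΦ : (volume : Measure ((Fin k → (EuclideanSpace ℝ (Fin d))) × (Fin (n - k) → (EuclideanSpace ℝ (Fin d))))).map Φ
      = ENNReal.ofReal (r ^ ((d : ℝ) / 2)) • volume := by
    have hF : MeasurePreserving (⇑me.symm) volume volume := MeasurePreserving.symm me hme
    rw [← hF.map_eq, Measure.map_map hΦm me.symm.measurable, hcomp, hmapΨ]
  have hofReal : ENNReal.ofReal (r ^ (-(d : ℝ) / 2)) * ENNReal.ofReal (r ^ ((d : ℝ) / 2)) = 1 := by
    rw [← ENNReal.ofReal_mul (Real.rpow_nonneg hr.le _), ← Real.rpow_add hr,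
      show -(d : ℝ)/2 + (d : ℝ)/2 = 0 by ring, Real.rpow_zero, ENNReal.ofReal_one]
  have hvol : (volume : Measure (Fin n → (EuclideanSpace ℝ (Fin d))))
      = ENNReal.ofReal (r ^ (-(d : ℝ) / 2)) •
        ((volume : Measure ((Fin k → (EuclideanSpace ℝ (Fin d))) × (Fin (n - k) → (EuclideanSpace ℝ (Fin d))))).map Φ) := by
    rw [hmapΦ, smul_smul, hofReal, one_smul]
  have hfc : Measurable fun x : Fin n → (EuclideanSpace ℝ (Fin d)) => (f x : ℝ≥0∞) := hfm.coe_nnreal_ennreal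
  have hfΦ : Measurable fun p : (Fin k → (EuclideanSpace ℝ (Fin d))) × (Fin (n - k) → (EuclideanSpace ℝ (Fin d))) => (f (Φ p) : ℝ≥0∞) :=
    hfc.comp hΦm
  have hSm : Measurable fun x : Fin n → (EuclideanSpace ℝ (Fin d)) => (fun i : Fin k => ∑ j, T i j • x j) :=
    (matLin T (EuclideanSpace ℝ (Fin d))).continuous_of_finiteDimensional.measurable
  have hSΦ : (fun x : Fin n → (EuclideanSpace ℝ (Fin d)) => (fun i : Fin k => ∑ j, T i j • x j)) ∘ Φ = Prod.fst := by
    funext p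
    show matLin T (EuclideanSpace ℝ (Fin d)) (Φ p) = p.1
    rw [hΦalt, map_add, matLin_matLin, matLin_matLin, hTP, hTA, matLin_one, matLin_zero,
      add_zero]
  have step1 : (volume.withDensity fun x : Fin n → (EuclideanSpace ℝ (Fin d)) => (f x : ℝ≥0∞)).map
      (fun x : Fin n → (EuclideanSpace ℝ (Fin d)) => fun i : Fin k => ∑ j, T i j • x j)
      = ENNReal.ofReal (r ^ (-(d : ℝ) / 2)) •
        ((volume.withDensity fun p : (Fin k → (EuclideanSpace ℝ (Fin d))) × (Fin (n - k) → (EuclideanSpace ℝ (Fin d))) =>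
            (f (Φ p) : ℝ≥0∞)).map
          ((fun x : Fin n → (EuclideanSpace ℝ (Fin d)) => fun i : Fin k => ∑ j, T i j • x j) ∘ Φ)) := by
    conv_lhs => rw [hvol, withDensity_smul_measure, withDensity_map_eq _ hΦm hfc,
      Measure.map_smul, Measure.map_map hSm hΦm]
  have hρm : Measurable fun x : Fin k → (EuclideanSpace ℝ (Fin d)) => ∫⁻ y, (f (Φ (x, y)) : ℝ≥0∞) :=
    hfΦ.lintegral_prod_right'
  rw [step1, hSΦ, map_fst_withDensity hfΦ,
    ← withDensity_smul (ENNReal.ofReal (r ^ (-(d : ℝ) / 2))) hρm]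
  congr 1
  rw [hg]
  funext x
  simp only [Pi.smul_apply, smul_eq_mul, hΦdef]
end

section
/- Let X_1, …, X_n be independent integer-valued random variables and l_1, …, l_n positive integers such that max_{j∈ℤ} P(X_i = j) ≤ 1/l_i for each i. Let Z_1, …, Z_n be independent with Z_i uniformly distributed on {0, 1, …, l_i − 1}. Then max_{j∈ℤ} P(X_1 + ⋯ + X_n = j) ≤ max_{j∈ℤ} P(Z_1 + ⋯ + Z_n = j). -/
open MeasureTheory
open scoped ENNReal


open Finset

/-- Symmetric chain decomposition data for the grid `{x : Fin n → ℕ | ∀ i, x i ≤ b i}`. -/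
structure IsSCD {n : ℕ} (b : Fin n → ℕ) (E : (Fin n → ℕ) → ℕ → (Fin n → ℕ))
    (a : (Fin n → ℕ) → ℕ) : Prop where
  ha₁ : ∀ x, (∀ i, x i ≤ b i) → a x ≤ ∑ i, x i
  ha₂ : ∀ x, (∀ i, x i ≤ b i) → (∑ i, x i) + a x ≤ ∑ i, b i
  hself : ∀ x, (∀ i, x i ≤ b i) → E x (∑ i, x i) = x
  hgrid : ∀ x, (∀ i, x i ≤ b i) → ∀ k, a x ≤ k → k + a x ≤ ∑ i, b i → ∀ i, E x k i ≤ b i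
  hsum : ∀ x, (∀ i, x i ≤ b i) → ∀ k, a x ≤ k → k + a x ≤ ∑ i, b i → ∑ i, E x k i = k
  haE : ∀ x, (∀ i, x i ≤ b i) → ∀ k, a x ≤ k → k + a x ≤ ∑ i, b i → a (E x k) = a x
  hEE : ∀ x, (∀ i, x i ≤ b i) → ∀ k, a x ≤ k → k + a x ≤ ∑ i, b i →
      ∀ k', E (E x k) k' = E x k'
  hmono : ∀ x, (∀ i, x i ≤ b i) → ∀ k k', a x ≤ k → k ≤ k' → k' + a x ≤ ∑ i, b i →
      ∀ i, E x k i ≤ E x k' i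

theorem exists_scd : ∀ (n : ℕ) (b : Fin n → ℕ), ∃ E a, IsSCD b E a := by
  intro n
  induction n with
  | zero =>
    intro b
    refine ⟨fun x _ => x, fun _ => 0, ?_⟩
    have hz : ∀ (f : Fin 0 → ℕ), ∑ i, f i = 0 := fun f => by simp
    constructor
    · intro x _; simp [hz]
    · intro x _; simp [hz]
    · intro x _; rfl
    · intro x _ k _ _ i; exact i.elim0
    · intro x _ k hk1 hk2; simp [hz] at hk1 hk2 ⊢; omega
    · intro x _ k _ _; rfl
    · intro x _ k _ _ k'; rfl
    · intro x _ k k' _ _ _ i; exact i.elim0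
  | succ n ih =>
    intro b
    obtain ⟨E', a', h'⟩ := ih (fun i => b i.succ)
    classical
    have hT : ∑ i, b i = b 0 + ∑ i : Fin n, b i.succ := Fin.sum_univ_succ b
    -- hook index
    set J : (Fin (n+1) → ℕ) → ℕ := fun x =>
      if (∑ i, Fin.tail x i) - a' (Fin.tail x) + x 0 ≤ b 0
      then (∑ i, Fin.tail x i) - a' (Fin.tail x) else b 0 - x 0 with hJ
    set A : (Fin (n+1) → ℕ) → ℕ := fun x => a' (Fin.tail x) + J x with hA
    set E : (Fin (n+1) → ℕ) → ℕ → (Fin (n+1) → ℕ) := fun x k =>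
      if k ≤ a' (Fin.tail x) + b 0 then
        Fin.cons (k - (a' (Fin.tail x) + J x)) (E' (Fin.tail x) (a' (Fin.tail x) + J x))
      else Fin.cons (b 0 - J x) (E' (Fin.tail x) (k - (b 0 - J x))) with hE
    have hsumsplit : ∀ x : Fin (n+1) → ℕ, ∑ i, x i = x 0 + ∑ i, Fin.tail x i := by
      intro x; rw [Fin.sum_univ_succ]; rfl
    have hJpos : ∀ v : Fin (n+1) → ℕ,
        (∑ i, Fin.tail v i) - a' (Fin.tail v) + v 0 ≤ b 0 →
        J v = (∑ i, Fin.tail v i) - a' (Fin.tail v) := by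
      intro v h; simp only [hJ]; rw [if_pos h]
    have hJneg : ∀ v : Fin (n+1) → ℕ,
        ¬ ((∑ i, Fin.tail v i) - a' (Fin.tail v) + v 0 ≤ b 0) →
        J v = b 0 - v 0 := by
      intro v h; simp only [hJ]; rw [if_neg h]
    -- basic facts for x in the grid
    have key : ∀ x : Fin (n+1) → ℕ, (∀ i, x i ≤ b i) →
        (∀ i, Fin.tail x i ≤ b i.succ) ∧
        a' (Fin.tail x) ≤ ∑ i, Fin.tail x i ∧
        (∑ i, Fin.tail x i) + a' (Fin.tail x) ≤ ∑ i : Fin n, b i.succ ∧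
        J x ≤ (∑ i, Fin.tail x i) - a' (Fin.tail x) ∧ J x ≤ b 0 ∧
        J x + x 0 ≤ b 0 ∧ x 0 ≤ b 0 := by
      intro x hx
      have hz : ∀ i, Fin.tail x i ≤ b i.succ := fun i => hx i.succ
      have h1 := h'.ha₁ _ hz
      have h2 := h'.ha₂ _ hz
      have hy : x 0 ≤ b 0 := hx 0
      refine ⟨hz, h1, h2, ?_, ?_, ?_, hy⟩
      · simp only [hJ]; split <;> omega
      · simp only [hJ]; split <;> omega
      · simp only [hJ]; split <;> omega
    -- master lemma about E x k
    have master : ∀ x, (∀ i, x i ≤ b i) → ∀ k, A x ≤ k → k + A x ≤ ∑ i, b i →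
        (∀ i, E x k i ≤ b i) ∧ (∑ i, E x k i = k) ∧ A (E x k) = A x ∧
        (∀ k', E (E x k) k' = E x k') := by
      intro x hx k hk1 hk2
      obtain ⟨hz, h1, h2, hju, hjq, hjy, hy⟩ := key x hx
      rw [hT] at hk2
      have hAx : A x = a' (Fin.tail x) + J x := rfl
      rw [hAx] at hk1 hk2
      by_cases hcase : k ≤ a' (Fin.tail x) + b 0
      · -- branch A : first leg of the hook
        have hEform : E x k = Fin.cons (k - (a' (Fin.tail x) + J x))
            (E' (Fin.tail x) (a' (Fin.tail x) + J x)) := by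
          simp only [hE]; rw [if_pos hcase]
        have hm1 : a' (Fin.tail x) ≤ a' (Fin.tail x) + J x := Nat.le_add_right _ _
        have hm2 : (a' (Fin.tail x) + J x) + a' (Fin.tail x) ≤ ∑ i : Fin n, b i.succ := by
          omega
        have hw := h'.hgrid _ hz _ hm1 hm2
        have hwsum := h'.hsum _ hz _ hm1 hm2
        have hwa := h'.haE _ hz _ hm1 hm2
        have hwE := h'.hEE _ hz _ hm1 hm2
        have h0 : (E x k) 0 = k - (a' (Fin.tail x) + J x) := by
          rw [hEform, Fin.cons_zero]
        have htail : Fin.tail (E x k) = E' (Fin.tail x) (a' (Fin.tail x) + J x) := by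
          rw [hEform, Fin.tail_cons]
        have hJw : J (E x k) = J x := by
          have hcond : (∑ i, Fin.tail (E x k) i) - a' (Fin.tail (E x k)) + (E x k) 0 ≤ b 0 := by
            rw [htail, h0, hwsum, hwa]; omega
          rw [hJpos _ hcond, htail, hwsum, hwa]; omega
        have hAw : A (E x k) = A x := by
          show a' (Fin.tail (E x k)) + J (E x k) = a' (Fin.tail x) + J x
          rw [htail, hwa, hJw]
        refine ⟨?_, ?_, hAw, ?_⟩
        · intro i
          rw [hEform]
          refine Fin.cases ?_ ?_ i
          · simp only [Fin.cons_zero]; omega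
          · intro i; simp only [Fin.cons_succ]; exact hw i
        · rw [hsumsplit, hEform, Fin.tail_cons, hwsum]
          simp only [Fin.cons_zero]
          omega
        · intro k'
          have e1 : ∀ z : Fin (n+1) → ℕ, E z k' = (if k' ≤ a' (Fin.tail z) + b 0 then
              (Fin.cons (k' - (a' (Fin.tail z) + J z)) (E' (Fin.tail z) (a' (Fin.tail z) + J z)) :
                Fin (n+1) → ℕ)
            else Fin.cons (b 0 - J z) (E' (Fin.tail z) (k' - (b 0 - J z)))) := fun z => rfl
          rw [e1 (E x k), e1 x, hJw, htail, hwa]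
          simp only [hwE]
      · -- branch B : second leg of the hook
        have hEform : E x k = Fin.cons (b 0 - J x)
            (E' (Fin.tail x) (k - (b 0 - J x))) := by
          simp only [hE]; rw [if_neg hcase]
        have hm1 : a' (Fin.tail x) ≤ k - (b 0 - J x) := by omega
        have hm2 : (k - (b 0 - J x)) + a' (Fin.tail x) ≤ ∑ i : Fin n, b i.succ := by
          omega
        have hw := h'.hgrid _ hz _ hm1 hm2
        have hwsum := h'.hsum _ hz _ hm1 hm2
        have hwa := h'.haE _ hz _ hm1 hm2
        have hwE := h'.hEE _ hz _ hm1 hm2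
        have h0 : (E x k) 0 = b 0 - J x := by
          rw [hEform, Fin.cons_zero]
        have htail : Fin.tail (E x k) = E' (Fin.tail x) (k - (b 0 - J x)) := by
          rw [hEform, Fin.tail_cons]
        have hJw : J (E x k) = J x := by
          have hcond : ¬ ((∑ i, Fin.tail (E x k) i) - a' (Fin.tail (E x k)) + (E x k) 0 ≤ b 0) := by
            rw [htail, h0, hwsum, hwa]; omega
          rw [hJneg _ hcond, h0]; omega
        have hAw : A (E x k) = A x := by
          show a' (Fin.tail (E x k)) + J (E x k) = a' (Fin.tail x) + J x
          rw [htail, hwa, hJw]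
        refine ⟨?_, ?_, hAw, ?_⟩
        · intro i
          rw [hEform]
          refine Fin.cases ?_ ?_ i
          · simp only [Fin.cons_zero]; omega
          · intro i; simp only [Fin.cons_succ]; exact hw i
        · rw [hsumsplit, hEform, Fin.tail_cons, hwsum]
          simp only [Fin.cons_zero]
          omega
        · intro k'
          have e1 : ∀ z : Fin (n+1) → ℕ, E z k' = (if k' ≤ a' (Fin.tail z) + b 0 then
              (Fin.cons (k' - (a' (Fin.tail z) + J z)) (E' (Fin.tail z) (a' (Fin.tail z) + J z)) :
                Fin (n+1) → ℕ)
            else Fin.cons (b 0 - J z) (E' (Fin.tail z) (k' - (b 0 - J z)))) := fun z => rfl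
          rw [e1 (E x k), e1 x, hJw, htail, hwa]
          simp only [hwE]
    refine ⟨E, A, ?_⟩
    constructor
    · -- ha₁
      intro x hx
      obtain ⟨hz, h1, h2, hju, hjq, hjy, hy⟩ := key x hx
      rw [hsumsplit x, hA]
      simp only
      omega
    · -- ha₂
      intro x hx
      obtain ⟨hz, h1, h2, hju, hjq, hjy, hy⟩ := key x hx
      rw [hsumsplit x, hT, hA]
      simp only
      omega
    · -- hself
      intro x hx
      obtain ⟨hz, h1, h2, hju, hjq, hjy, hy⟩ := key x hx
      have hs := hsumsplit x
      by_cases hc : (∑ i, Fin.tail x i) - a' (Fin.tail x) + x 0 ≤ b 0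
      · have hjval : J x = (∑ i, Fin.tail x i) - a' (Fin.tail x) := hJpos x hc
        have hle : ∑ i, x i ≤ a' (Fin.tail x) + b 0 := by omega
        have hform : E x (∑ i, x i) = Fin.cons ((∑ i, x i) - (a' (Fin.tail x) + J x))
            (E' (Fin.tail x) (a' (Fin.tail x) + J x)) := by
          simp only [hE]; rw [if_pos hle]
        have harg : a' (Fin.tail x) + J x = ∑ i, Fin.tail x i := by omega
        rw [hform, harg, show (∑ i, x i) - (∑ i, Fin.tail x i) = x 0 from by omega,
          h'.hself _ hz, Fin.cons_self_tail]
      · have hjval : J x = b 0 - x 0 := hJneg x hc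
        have hle : ¬ (∑ i, x i ≤ a' (Fin.tail x) + b 0) := by omega
        have hform : E x (∑ i, x i) = Fin.cons (b 0 - J x)
            (E' (Fin.tail x) ((∑ i, x i) - (b 0 - J x))) := by
          simp only [hE]; rw [if_neg hle]
        rw [hform, show b 0 - J x = x 0 from by omega,
          show (∑ i, x i) - x 0 = ∑ i, Fin.tail x i from by omega,
          h'.hself _ hz, Fin.cons_self_tail]
    · -- hgrid
      intro x hx k hk1 hk2; exact (master x hx k hk1 hk2).1
    · -- hsum
      intro x hx k hk1 hk2; exact (master x hx k hk1 hk2).2.1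
    · -- haE
      intro x hx k hk1 hk2; exact (master x hx k hk1 hk2).2.2.1
    · -- hEE
      intro x hx k hk1 hk2; exact (master x hx k hk1 hk2).2.2.2
    · -- hmono
      intro x hx k k' hk1 hkk hk2 i
      obtain ⟨hz, h1, h2, hju, hjq, hjy, hy⟩ := key x hx
      rw [hT] at hk2
      have hAx : A x = a' (Fin.tail x) + J x := rfl
      rw [hAx] at hk1 hk2
      by_cases hc1 : k ≤ a' (Fin.tail x) + b 0 <;>
        by_cases hc2 : k' ≤ a' (Fin.tail x) + b 0
      · -- A-A
        have e1 : E x k = Fin.cons (k - (a' (Fin.tail x) + J x))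
            (E' (Fin.tail x) (a' (Fin.tail x) + J x)) := by simp only [hE]; rw [if_pos hc1]
        have e2 : E x k' = Fin.cons (k' - (a' (Fin.tail x) + J x))
            (E' (Fin.tail x) (a' (Fin.tail x) + J x)) := by simp only [hE]; rw [if_pos hc2]
        rw [e1, e2]
        refine Fin.cases ?_ ?_ i
        · simp only [Fin.cons_zero]; omega
        · intro i; simp only [Fin.cons_succ]; exact le_rfl
      · -- A-B
        have e1 : E x k = Fin.cons (k - (a' (Fin.tail x) + J x))
            (E' (Fin.tail x) (a' (Fin.tail x) + J x)) := by simp only [hE]; rw [if_pos hc1]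
        have e2 : E x k' = Fin.cons (b 0 - J x)
            (E' (Fin.tail x) (k' - (b 0 - J x))) := by simp only [hE]; rw [if_neg hc2]
        rw [e1, e2]
        have hmm := h'.hmono _ hz (a' (Fin.tail x) + J x) (k' - (b 0 - J x))
          (Nat.le_add_right _ _) (by omega) (by omega)
        refine Fin.cases ?_ ?_ i
        · simp only [Fin.cons_zero]; omega
        · intro i; simp only [Fin.cons_succ]; exact hmm i
      · -- B-A impossible
        omega
      · -- B-B
        have e1 : E x k = Fin.cons (b 0 - J x)
            (E' (Fin.tail x) (k - (b 0 - J x))) := by simp only [hE]; rw [if_neg hc1]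
        have e2 : E x k' = Fin.cons (b 0 - J x)
            (E' (Fin.tail x) (k' - (b 0 - J x))) := by simp only [hE]; rw [if_neg hc2]
        rw [e1, e2]
        have hmm := h'.hmono _ hz (k - (b 0 - J x)) (k' - (b 0 - J x))
          (by omega) (by omega) (by omega)
        refine Fin.cases ?_ ?_ i
        · simp only [Fin.cons_zero]; exact le_rfl
        · intro i; simp only [Fin.cons_succ]; exact hmm i

open Finset in
theorem grid_sperner {n : ℕ} (b : Fin n → ℕ) (S : Finset (Fin n → ℕ))
    (hS : ∀ x ∈ S, ∀ i, x i ≤ b i)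
    (hanti : ∀ x ∈ S, ∀ y ∈ S, x ≠ y → ¬ (∀ i, x i ≤ y i)) :
    S.card ≤ ((Fintype.piFinset fun i => Finset.range (b i + 1)).filter
      (fun x => ∑ i, x i = (∑ i, b i) / 2)).card := by
  obtain ⟨E, a, h⟩ := exists_scd n b
  set M := (∑ i, b i) / 2 with hM
  apply Finset.card_le_card_of_injOn (fun x => E x M)
  · intro x hx
    have hxg := hS x hx
    have h1 := h.ha₁ x hxg
    have h2 := h.ha₂ x hxg
    have hr1 : a x ≤ M := by omega
    have hr2 : M + a x ≤ ∑ i, b i := by omega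
    simp only [Finset.mem_coe, Finset.mem_filter, Fintype.mem_piFinset, Finset.mem_range]
    exact ⟨fun i => Nat.lt_succ_of_le (h.hgrid x hxg M hr1 hr2 i), h.hsum x hxg M hr1 hr2⟩
  · intro x hx y hy hxy0
    have hxy : E x M = E y M := hxy0
    have hxg := hS x hx
    have hyg := hS y hy
    have h1x := h.ha₁ x hxg; have h2x := h.ha₂ x hxg
    have h1y := h.ha₁ y hyg; have h2y := h.ha₂ y hyg
    have hrx1 : a x ≤ M := by omega
    have hrx2 : M + a x ≤ ∑ i, b i := by omega
    have hry1 : a y ≤ M := by omega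
    have hry2 : M + a y ≤ ∑ i, b i := by omega
    have hEeq : ∀ k', E x k' = E y k' := by
      intro k'
      rw [← h.hEE x hxg M hrx1 hrx2 k', hxy, h.hEE y hyg M hry1 hry2 k']
    have haeq : a x = a y := by
      rw [← h.haE x hxg M hrx1 hrx2, hxy, h.haE y hyg M hry1 hry2]
    by_contra hne
    rcases le_total (∑ i, x i) (∑ i, y i) with hle | hle
    · refine hanti x hx y hy hne ?_
      intro i
      have hmm := h.hmono y hyg (∑ i, x i) (∑ i, y i) (by omega) hle h2y i
      have hx' : E y (∑ i, x i) = x := by rw [← hEeq, h.hself x hxg]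
      have hy' : E y (∑ i, y i) = y := h.hself y hyg
      rwa [hx', hy'] at hmm
    · refine hanti y hy x hx (Ne.symm hne) ?_
      intro i
      have hmm := h.hmono x hxg (∑ i, y i) (∑ i, x i) (by omega) hle h2x i
      have hy' : E x (∑ i, y i) = y := by rw [hEeq, h.hself y hyg]
      have hx' : E x (∑ i, x i) = x := h.hself x hxg
      rwa [hy', hx'] at hmm

open Finset in
/-- Number of ways to write `j` as a sum with `i`-th part in `K i` is at most the number of
ways to write the middle value as a sum with `i`-th part in `{0, …, l i - 1}`. -/
theorem count_sol_le {n : ℕ} (l : Fin n → ℕ) (hl : ∀ i, 0 < l i)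
    (K : Fin n → Finset ℤ) (hK : ∀ i, (K i).card = l i) (j : ℤ) :
    ((Fintype.piFinset K).filter (fun x => ∑ i, x i = j)).card ≤
      ((Fintype.piFinset fun i => Finset.range (l i)).filter
        (fun x => ∑ i, x i = (∑ i, (l i - 1)) / 2)).card := by
  classical
  set A := (Fintype.piFinset K).filter (fun x : Fin n → ℤ => ∑ i, x i = j) with hA
  set f : (Fin n → ℤ) → (Fin n → ℕ) := fun x i =>
    if h : x i ∈ K i then (((K i).orderIsoOfFin (hK i)).symm ⟨x i, h⟩ : Fin (l i)).val
    else 0 with hf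
  have hmemK : ∀ x ∈ A, ∀ i, x i ∈ K i := by
    intro x hx i
    have := (Finset.mem_filter.mp hx).1
    exact (Fintype.mem_piFinset.mp this) i
  have hsumj : ∀ x ∈ A, ∑ i, x i = j := fun x hx => (Finset.mem_filter.mp hx).2
  have hfval : ∀ (x : Fin n → ℤ) (i : Fin n) (h : x i ∈ K i),
      f x i = (((K i).orderIsoOfFin (hK i)).symm ⟨x i, h⟩ : Fin (l i)).val := by
    intro x i h; simp only [hf, dif_pos h]
  have hmono : ∀ x ∈ A, ∀ y ∈ A, (∀ i, f x i ≤ f y i) → ∀ i, x i ≤ y i := by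
    intro x hx y hy hle i
    have hxi := hmemK x hx i
    have hyi := hmemK y hy i
    have hlei := hle i
    rw [hfval x i hxi, hfval y i hyi] at hlei
    have h1 : (((K i).orderIsoOfFin (hK i)).symm ⟨x i, hxi⟩ : Fin (l i)) ≤
        ((K i).orderIsoOfFin (hK i)).symm ⟨y i, hyi⟩ := by
      rw [Fin.le_def]; exact hlei
    have h2 := (((K i).orderIsoOfFin (hK i)).symm.le_iff_le).mp h1
    exact Subtype.coe_le_coe.mpr h2
  have hinj : Set.InjOn f A := by
    intro x hx y hy hfeq
    funext i
    have hxi := hmemK x hx i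
    have hyi := hmemK y hy i
    have h1 : f x i = f y i := congrFun hfeq i
    rw [hfval x i hxi, hfval y i hyi] at h1
    have h2 : (((K i).orderIsoOfFin (hK i)).symm ⟨x i, hxi⟩ : Fin (l i)) =
        ((K i).orderIsoOfFin (hK i)).symm ⟨y i, hyi⟩ := Fin.ext h1
    have h3 := ((K i).orderIsoOfFin (hK i)).symm.injective h2
    exact congrArg Subtype.val h3
  have hcard : A.card = (A.image f).card := (Finset.card_image_of_injOn hinj).symm
  rw [hcard]
  have hS1 : ∀ u ∈ A.image f, ∀ i, u i ≤ l i - 1 := by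
    intro u hu
    obtain ⟨x, hx, rfl⟩ := Finset.mem_image.mp hu
    intro i
    show f x i ≤ l i - 1
    have hxi := hmemK x hx i
    rw [hfval x i hxi]
    have := (((K i).orderIsoOfFin (hK i)).symm ⟨x i, hxi⟩ : Fin (l i)).isLt
    omega
  have hS2 : ∀ u ∈ A.image f, ∀ v ∈ A.image f, u ≠ v → ¬ (∀ i, u i ≤ v i) := by
    intro u hu v hv huv hle
    obtain ⟨x, hx, rfl⟩ := Finset.mem_image.mp hu
    obtain ⟨y, hy, rfl⟩ := Finset.mem_image.mp hv
    have hxy : x ≠ y := fun h => huv (by rw [h])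
    have hptle : ∀ i, x i ≤ y i := hmono x hx y hy hle
    obtain ⟨i0, hne0⟩ : ∃ i0, x i0 ≠ y i0 := by
      by_contra hcon
      push_neg at hcon
      exact hxy (funext hcon)
    have hlt : ∑ i, x i < ∑ i, y i := by
      refine Finset.sum_lt_sum (fun i _ => hptle i) ⟨i0, Finset.mem_univ i0, ?_⟩
      exact lt_of_le_of_ne (hptle i0) hne0
    rw [hsumj x hx, hsumj y hy] at hlt
    exact lt_irrefl j hlt
  have hstep := grid_sperner (fun i => l i - 1) (A.image f) hS1 hS2
  have hrw : (fun i : Fin n => Finset.range (l i - 1 + 1)) = (fun i => Finset.range (l i)) := by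
    funext i
    rw [Nat.sub_add_cancel (hl i)]
  rw [hrw] at hstep
  exact hstep

open Finset in
theorem count_nat_le_int {n : ℕ} (l : Fin n → ℕ) :
    (((Fintype.piFinset fun i => Finset.range (l i)).filter
        (fun x => ∑ i, x i = (∑ i, (l i - 1)) / 2)).card : ℕ) ≤
      ((Fintype.piFinset fun i => Finset.Ico (0:ℤ) (l i)).filter
        (fun x => ∑ i, x i = ((((∑ i, (l i - 1)) / 2 : ℕ)) : ℤ))).card := by
  classical
  apply Finset.card_le_card_of_injOn (fun x => fun i => (x i : ℤ))
  · intro x hx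
    simp only [Finset.mem_coe, Finset.mem_filter, Fintype.mem_piFinset, Finset.mem_range,
      Finset.mem_Ico] at hx ⊢
    refine ⟨fun i => ⟨Int.ofNat_nonneg _, ?_⟩, ?_⟩
    · exact_mod_cast (hx.1 i)
    · rw [← Nat.cast_sum]
      exact_mod_cast congrArg (Nat.cast : ℕ → ℤ) hx.2
  · intro x _ y _ hxy
    funext i
    have h2 : ((x i : ℤ)) = ((y i : ℤ)) := congrFun hxy i
    exact_mod_cast h2


open scoped ENNReal
open Finset

/-- `(Fin n → ℤ) × ℤ ≃ stuff` via `Fin.cons`. -/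
def consE (n : ℕ) : (ℤ × (Fin n → ℤ)) ≃ (Fin (n+1) → ℤ) where
  toFun p := Fin.cons p.1 p.2
  invFun x := (x 0, Fin.tail x)
  left_inv p := by simp
  right_inv x := by simp

/-- Convolution-with-`h` of the family `f`, evaluated at `j`. -/
noncomputable def solh (n : ℕ) (f : Fin n → ℤ → ℝ≥0∞) (h : ℤ → ℝ≥0∞) (j : ℤ) : ℝ≥0∞ :=
  ∑' p : (Fin n → ℤ) × ℤ,
    if (∑ i, p.1 i) + p.2 = j then (∏ i, f i (p.1 i)) * h p.2 else 0

theorem solh_zero (f : Fin 0 → ℤ → ℝ≥0∞) (h : ℤ → ℝ≥0∞) (j : ℤ) : solh 0 f h j = h j := by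
  rw [solh, ENNReal.tsum_prod']
  rw [tsum_eq_single (fun i : Fin 0 => (0:ℤ)) (fun b hb => absurd (Subsingleton.elim b _) hb)]
  rw [tsum_eq_single j]
  · simp
  · intro y hy
    simp only [Finset.univ_eq_empty, Finset.sum_empty, zero_add]
    rw [if_neg hy]

theorem solh_succ (n : ℕ) (f : Fin (n+1) → ℤ → ℝ≥0∞) (h : ℤ → ℝ≥0∞) (j : ℤ) :
    solh (n+1) f h j = ∑' k : ℤ, f 0 k * solh n (fun i => f i.succ) h (j - k) := by
  rw [solh]
  have he : ∀ (g : ((Fin (n+1) → ℤ) × ℤ) → ℝ≥0∞),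
      ∑' p, g p = ∑' q : (ℤ × (Fin n → ℤ)) × ℤ, g ((consE n) q.1, q.2) := by
    intro g
    exact (Equiv.tsum_eq (Equiv.prodCongr (consE n) (Equiv.refl ℤ)) g).symm
  rw [he]
  rw [ENNReal.tsum_prod']
  rw [ENNReal.tsum_prod']
  have hterm : ∀ (k : ℤ) (xs : Fin n → ℤ) (y : ℤ),
      (if (∑ i, ((consE n) (k, xs)) i) + y = j
        then (∏ i, f i (((consE n) (k, xs)) i)) * h y else 0)
      = f 0 k * (if (∑ i, xs i) + y = j - k
        then (∏ i, f i.succ (xs i)) * h y else 0) := by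
    intro k xs y
    have hsum : (∑ i, ((consE n) (k, xs)) i) = k + ∑ i, xs i := by
      show (∑ i, (Fin.cons k xs : Fin (n+1) → ℤ) i) = _
      rw [Fin.sum_univ_succ]
      simp
    have hprod : (∏ i, f i (((consE n) (k, xs)) i)) = f 0 k * ∏ i, f i.succ (xs i) := by
      show (∏ i, f i ((Fin.cons k xs : Fin (n+1) → ℤ) i)) = _
      rw [Fin.prod_univ_succ]
      simp
    rw [hsum, hprod]
    by_cases hc : (∑ i, xs i) + y = j - k
    · rw [if_pos (by omega), if_pos hc]; ring
    · rw [if_neg (by omega), if_neg hc, mul_zero]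
  calc ∑' (k : ℤ) (xs : Fin n → ℤ) (y : ℤ),
        (if (∑ i, ((consE n) (k, xs)) i) + y = j
          then (∏ i, f i (((consE n) (k, xs)) i)) * h y else 0)
      = ∑' (k : ℤ) (xs : Fin n → ℤ) (y : ℤ), f 0 k *
          (if (∑ i, xs i) + y = j - k then (∏ i, f i.succ (xs i)) * h y else 0) := by
        congr 1; funext k; congr 1; funext xs; congr 1; funext y; exact hterm k xs y
    _ = ∑' (k : ℤ), f 0 k * ∑' (xs : Fin n → ℤ) (y : ℤ),
          (if (∑ i, xs i) + y = j - k then (∏ i, f i.succ (xs i)) * h y else 0) := by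
        congr 1; funext k
        rw [← ENNReal.tsum_mul_left]
        congr 1; funext xs
        rw [← ENNReal.tsum_mul_left]
    _ = ∑' (k : ℤ), f 0 k * solh n (fun i => f i.succ) h (j - k) := by
        congr 1; funext k
        congr 1
        rw [solh, ENNReal.tsum_prod']

/-- total mass bound -/
theorem solh_total (n : ℕ) (f : Fin n → ℤ → ℝ≥0∞) (hf1 : ∀ i, ∑' k, f i k ≤ 1)
    (h : ℤ → ℝ≥0∞) : ∑' j, solh n f h j ≤ ∑' y, h y := by
  induction n with
  | zero =>
    simp only [solh_zero]
    exact le_rfl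
  | succ n ih =>
    have hf1' : ∀ i : Fin n, ∑' k, (fun i => f i.succ) i k ≤ 1 := fun i => hf1 i.succ
    calc ∑' j, solh (n+1) f h j
        = ∑' j, ∑' k, f 0 k * solh n (fun i => f i.succ) h (j - k) := by
          congr 1; funext j; exact solh_succ n f h j
      _ = ∑' k, ∑' j, f 0 k * solh n (fun i => f i.succ) h (j - k) := ENNReal.tsum_comm
      _ = ∑' k, f 0 k * ∑' j, solh n (fun i => f i.succ) h (j - k) := by
          congr 1; funext k; rw [ENNReal.tsum_mul_left]
      _ = ∑' k, f 0 k * ∑' j, solh n (fun i => f i.succ) h j := by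
          congr 1; funext k; congr 1
          exact Equiv.tsum_eq (Equiv.subRight k) (solh n (fun i => f i.succ) h)
      _ ≤ ∑' k, f 0 k * ∑' y, h y := by
          apply ENNReal.tsum_le_tsum
          intro k
          exact mul_le_mul_right (ih _ hf1') _
      _ = (∑' k, f 0 k) * ∑' y, h y := ENNReal.tsum_mul_right
      _ ≤ 1 * ∑' y, h y := mul_le_mul_left (hf1 0) _
      _ = ∑' y, h y := one_mul _

theorem exists_max_outside (Q : ℤ → ℝ≥0∞) (hQ : ∑' k, Q k ≠ ∞) (K : Finset ℤ) :
    ∃ t₀, t₀ ∉ K ∧ ∀ t ∉ K, Q t ≤ Q t₀ := by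
  classical
  set s := ⨆ (t : ℤ) (_ : t ∉ K), Q t with hs
  by_cases hs0 : s = 0
  · obtain ⟨t₀, ht₀⟩ := K.exists_notMem
    refine ⟨t₀, ht₀, fun t ht => ?_⟩
    have : Q t ≤ s := le_iSup₂ (f := fun t (_ : t ∉ K) => Q t) t ht
    rw [hs0] at this
    simp only [le_zero_iff] at this
    rw [this]
    exact zero_le
  · have hstop : s ≠ ∞ := by
      have : s ≤ ∑' k, Q k := by
        apply iSup₂_le
        intro t _
        exact ENNReal.le_tsum t
      exact fun hc => hQ (top_le_iff.mp (hc ▸ this))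
    have hhalf : s / 2 < s := ENNReal.half_lt_self hs0 hstop
    have hfin : {t : ℤ | s / 2 ≤ Q t}.Finite := by
      apply ENNReal.finite_const_le_of_tsum_ne_top hQ
      simp only [ne_eq, ENNReal.div_eq_zero_iff]
      push_neg
      exact ⟨hs0, by norm_num⟩
    set G := hfin.toFinset.filter (fun t => t ∉ K) with hG
    have hGne : G.Nonempty := by
      have : s / 2 < ⨆ (t : ℤ) (_ : t ∉ K), Q t := hhalf
      rw [lt_iSup_iff] at this
      obtain ⟨t, ht⟩ := this
      rw [lt_iSup_iff] at ht
      obtain ⟨htK, htQ⟩ := ht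
      exact ⟨t, Finset.mem_filter.mpr ⟨hfin.mem_toFinset.mpr htQ.le, htK⟩⟩
    obtain ⟨t₀, ht₀G, ht₀max⟩ := Finset.exists_max_image G Q hGne
    have ht₀ : t₀ ∉ K := (Finset.mem_filter.mp ht₀G).2
    refine ⟨t₀, ht₀, fun t ht => ?_⟩
    by_cases htG : s / 2 ≤ Q t
    · exact ht₀max t (Finset.mem_filter.mpr ⟨hfin.mem_toFinset.mpr htG, ht⟩)
    · push_neg at htG
      have h1 : s / 2 ≤ Q t₀ := hfin.mem_toFinset.mp (Finset.mem_filter.mp ht₀G).1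
      exact le_trans htG.le h1

theorem exists_top_finset (Q : ℤ → ℝ≥0∞) (hQ : ∑' k, Q k ≠ ∞) (l : ℕ) :
    ∃ K : Finset ℤ, K.card = l ∧ ∀ t ∉ K, ∀ k ∈ K, Q t ≤ Q k := by
  induction l with
  | zero => exact ⟨∅, rfl, fun t _ k hk => absurd hk (Finset.notMem_empty k)⟩
  | succ l ih =>
    obtain ⟨K, hKc, hKtop⟩ := ih
    obtain ⟨t₀, ht₀K, ht₀max⟩ := exists_max_outside Q hQ K
    refine ⟨insert t₀ K, by rw [Finset.card_insert_of_notMem ht₀K, hKc], ?_⟩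
    intro t ht k hk
    have htne : t ∉ K := fun hc => ht (Finset.mem_insert_of_mem hc)
    rcases Finset.mem_insert.mp hk with rfl | hkK
    · exact ht₀max t htne
    · exact hKtop t htne k hkK

theorem key_peel {l : ℕ} (hl : 0 < l) (f Q : ℤ → ℝ≥0∞)
    (hfb : ∀ k, f k ≤ (l : ℝ≥0∞)⁻¹) (hf1 : ∑' k, f k ≤ 1) (hQ : ∑' k, Q k ≠ ∞) :
    ∑' k, f k * Q k ≤ (l : ℝ≥0∞)⁻¹ * ⨆ (K : Finset ℤ) (_ : K.card = l), ∑ k ∈ K, Q k := by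
  classical
  obtain ⟨K, hKc, hKtop⟩ := exists_top_finset Q hQ l
  have hKne : K.Nonempty := Finset.card_pos.mp (by rw [hKc]; exact hl)
  set c := K.inf' hKne Q with hc
  have hcK : ∀ k ∈ K, c ≤ Q k := fun k hk => Finset.inf'_le _ hk
  have hout : ∀ t ∉ K, Q t ≤ c :=
    fun t ht => Finset.le_inf' hKne _ (fun b hb => hKtop t ht b hb)
  have hln0 : (l : ℝ≥0∞) ≠ 0 := by exact_mod_cast Nat.pos_iff_ne_zero.mp hl
  have hlnt : (l : ℝ≥0∞) ≠ ∞ := ENNReal.natCast_ne_top l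
  calc ∑' k, f k * Q k
      ≤ ∑' k, (f k * min (Q k) c + f k * (Q k - c)) := by
        apply ENNReal.tsum_le_tsum
        intro k
        rw [← mul_add]
        apply mul_le_mul_right
        rcases le_total (Q k) c with hqc | hqc
        · rw [min_eq_left hqc]; exact le_self_add
        · rw [min_eq_right hqc, add_tsub_cancel_of_le hqc]
    _ = (∑' k, f k * min (Q k) c) + ∑' k, f k * (Q k - c) := ENNReal.tsum_add
    _ ≤ 1 * c + ∑ k ∈ K, (l : ℝ≥0∞)⁻¹ * (Q k - c) := by
        apply add_le_add
        · calc (∑' k, f k * min (Q k) c) ≤ ∑' k, f k * c := by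
                apply ENNReal.tsum_le_tsum
                intro k
                exact mul_le_mul_right (min_le_right _ _) _
            _ = (∑' k, f k) * c := ENNReal.tsum_mul_right
            _ ≤ 1 * c := mul_le_mul_left hf1 _
        · rw [tsum_eq_sum (s := K) (fun t ht => by
            rw [tsub_eq_zero_of_le (hout t ht), mul_zero])]
          apply Finset.sum_le_sum
          intro k _
          exact mul_le_mul_left (hfb k) _
    _ = c + (l : ℝ≥0∞)⁻¹ * ∑ k ∈ K, (Q k - c) := by rw [one_mul, Finset.mul_sum]
    _ = (l : ℝ≥0∞)⁻¹ * ∑ k ∈ K, Q k := by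
        have hsplit : ∑ k ∈ K, Q k = l * c + ∑ k ∈ K, (Q k - c) := by
          have h1 : ∑ k ∈ K, Q k = ∑ k ∈ K, (c + (Q k - c)) :=
            Finset.sum_congr rfl (fun k hk => (add_tsub_cancel_of_le (hcK k hk)).symm)
          rw [h1, Finset.sum_add_distrib, Finset.sum_const, hKc, nsmul_eq_mul]
        rw [hsplit, mul_add, ← mul_assoc, ENNReal.inv_mul_cancel hln0 hlnt, one_mul]
    _ ≤ (l : ℝ≥0∞)⁻¹ * ⨆ (K' : Finset ℤ) (_ : K'.card = l), ∑ k ∈ K', Q k := by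
        apply mul_le_mul_right
        exact le_iSup₂ (f := fun (K' : Finset ℤ) (_ : K'.card = l) => ∑ k ∈ K', Q k) K hKc

theorem solh_shift (n : ℕ) (f : Fin n → ℤ → ℝ≥0∞) (h : ℤ → ℝ≥0∞) (K₀ : Finset ℤ) (j : ℤ) :
    ∑ k ∈ K₀, solh n f h (j - k) = solh n f (fun y => ∑ k ∈ K₀, h (y - k)) j := by
  have hk : ∀ k : ℤ, ∑' p : (Fin n → ℤ) × ℤ,
      (if (∑ i, p.1 i) + p.2 = j then (∏ i, f i (p.1 i)) * h (p.2 - k) else 0)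
      = solh n f h (j - k) := by
    intro k
    rw [solh]
    rw [← Equiv.tsum_eq (Equiv.prodCongr (Equiv.refl (Fin n → ℤ)) (Equiv.addRight k))
      (fun p : (Fin n → ℤ) × ℤ =>
        if (∑ i, p.1 i) + p.2 = j then (∏ i, f i (p.1 i)) * h (p.2 - k) else 0)]
    apply tsum_congr
    intro p
    obtain ⟨x, y⟩ := p
    simp only [Equiv.prodCongr_apply, Equiv.coe_refl, Prod.map_apply, id_eq,
      Equiv.coe_addRight]
    by_cases hc : (∑ i, x i) + y = j - k
    · rw [if_pos (by omega), if_pos hc, add_sub_cancel_right]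
    · rw [if_neg (by omega), if_neg hc]
  rw [solh]
  have hterm : ∀ p : (Fin n → ℤ) × ℤ,
      (if (∑ i, p.1 i) + p.2 = j then (∏ i, f i (p.1 i)) * (∑ k ∈ K₀, h (p.2 - k)) else 0)
      = ∑ k ∈ K₀, (if (∑ i, p.1 i) + p.2 = j then (∏ i, f i (p.1 i)) * h (p.2 - k) else 0) := by
    intro p
    by_cases hc : (∑ i, p.1 i) + p.2 = j
    · rw [if_pos hc, Finset.mul_sum]
      exact Finset.sum_congr rfl (fun k _ => by rw [if_pos hc])
    · rw [if_neg hc, Finset.sum_congr rfl (fun k _ => by rw [if_neg hc]),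
        Finset.sum_const, smul_zero]
  rw [tsum_congr hterm, Summable.tsum_finsetSum (fun k _ => ENNReal.summable)]
  exact (Finset.sum_congr rfl (fun k _ => hk k)).symm

theorem solh_cons_ind (n : ℕ) (K₀ : Finset ℤ) (K' : Fin n → Finset ℤ)
    (h : ℤ → ℝ≥0∞) (j : ℤ) :
    solh (n+1) (fun i k => if k ∈ (Fin.cons K₀ K' : Fin (n+1) → Finset ℤ) i then 1 else 0) h j
      = ∑ k ∈ K₀, solh n (fun i k => if k ∈ K' i then 1 else 0) h (j - k) := by
  classical
  rw [solh_succ]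
  rw [tsum_eq_sum (s := K₀) (fun k hk => by
    simp only [Fin.cons_zero]
    rw [if_neg hk, zero_mul])]
  apply Finset.sum_congr rfl
  intro k hk
  simp only [Fin.cons_zero, Fin.cons_succ]
  rw [if_pos hk, one_mul]

theorem peel_all : ∀ (n : ℕ) (f : Fin n → ℤ → ℝ≥0∞) (l : Fin n → ℕ),
    (∀ i, 0 < l i) → (∀ i k, f i k ≤ ((l i : ℝ≥0∞))⁻¹) → (∀ i, ∑' k, f i k ≤ 1) →
    ∀ (h : ℤ → ℝ≥0∞), ∑' y, h y ≠ ∞ →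
    (⨆ j : ℤ, solh n f h j) ≤ (∏ i, ((l i : ℝ≥0∞))⁻¹) *
      ⨆ (K : Fin n → Finset ℤ) (_ : ∀ i, (K i).card = l i) (j : ℤ),
        solh n (fun i k => if k ∈ K i then 1 else 0) h j := by
  intro n
  induction n with
  | zero =>
    intro f l hl hfb hf1 h hh
    simp only [solh_zero]
    rw [Finset.univ_eq_empty, Finset.prod_empty, one_mul]
    apply iSup_le
    intro j
    apply le_iSup_of_le (fun i : Fin 0 => (∅ : Finset ℤ))
    apply le_iSup_of_le (fun i : Fin 0 => i.elim0)
    apply le_iSup_of_le j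
    exact le_rfl
  | succ n ih =>
    intro f l hl hfb hf1 h hh
    apply iSup_le
    intro j
    rw [solh_succ]
    have hQ : ∑' k, solh n (fun i => f i.succ) h (j - k) ≠ ∞ := by
      have he : ∑' k, solh n (fun i => f i.succ) h (j - k)
          = ∑' m, solh n (fun i => f i.succ) h m :=
        Equiv.tsum_eq (Equiv.subLeft j) (solh n (fun i => f i.succ) h)
      rw [he]
      exact fun hc => hh (top_le_iff.mp (hc ▸ solh_total n _ (fun i => hf1 i.succ) h))
    have step1 := key_peel (hl 0) (f 0) (fun k => solh n (fun i => f i.succ) h (j - k))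
      (hfb 0) (hf1 0) hQ
    refine step1.trans ?_
    rw [Fin.prod_univ_succ, mul_assoc]
    apply mul_le_mul_right
    apply iSup_le; intro K₀; apply iSup_le; intro hK₀c
    rw [solh_shift]
    have hh'top : ∑' y, (fun y => ∑ k ∈ K₀, h (y - k)) y ≠ ∞ := by
      have h1 : ∑' y, (fun y => ∑ k ∈ K₀, h (y - k)) y = ∑ k ∈ K₀, ∑' y, h (y - k) :=
        Summable.tsum_finsetSum (fun k _ => ENNReal.summable)
      rw [h1]
      have h2 : ∀ k ∈ K₀, ∑' y, h (y - k) ≠ ∞ := by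
        intro k _
        have h3 : ∑' y, h (y - k) = ∑' y, h y := Equiv.tsum_eq (Equiv.subRight k) h
        rw [h3]; exact hh
      exact (ENNReal.sum_lt_top.mpr (fun k hk => lt_top_iff_ne_top.mpr (h2 k hk))).ne
    have hmain := ih (fun i => f i.succ) (fun i => l i.succ) (fun i => hl i.succ)
      (fun i k => hfb i.succ k) (fun i => hf1 i.succ)
      (fun y => ∑ k ∈ K₀, h (y - k)) hh'top
    refine (le_iSup _ j).trans (hmain.trans ?_)
    apply mul_le_mul_right
    apply iSup_le; intro K'; apply iSup_le; intro hK'c; apply iSup_le; intro j'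
    rw [← solh_shift, ← solh_cons_ind]
    have hcond : ∀ i : Fin (n+1), ((Fin.cons K₀ K' : Fin (n+1) → Finset ℤ) i).card = l i := by
      intro i
      refine Fin.cases ?_ ?_ i
      · rw [Fin.cons_zero]; exact hK₀c
      · intro i'; rw [Fin.cons_succ]; exact hK'c i'
    apply le_iSup_of_le (Fin.cons K₀ K')
    apply le_iSup_of_le hcond
    exact le_iSup _ j'

/-- point mass at `0`. -/
noncomputable def delta0 : ℤ → ℝ≥0∞ := fun y => if y = 0 then 1 else 0

theorem delta0_total : ∑' y, delta0 y = 1 := by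
  simp only [delta0]
  rw [tsum_eq_single 0 (fun y hy => if_neg hy)]
  exact if_pos rfl

theorem solh_delta0 (n : ℕ) (f : Fin n → ℤ → ℝ≥0∞) (j : ℤ) :
    solh n f delta0 j
      = ∑' x : Fin n → ℤ, if (∑ i, x i) = j then ∏ i, f i (x i) else 0 := by
  rw [solh, ENNReal.tsum_prod']
  apply tsum_congr
  intro x
  rw [tsum_eq_single 0 (fun y hy => by
    have hd : delta0 y = 0 := if_neg hy
    rw [hd, mul_zero, ite_self])]
  have hd : delta0 (0:ℤ) = 1 := if_pos rfl
  rw [hd, mul_one, add_zero]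

theorem tsum_ind_count (n : ℕ) (K : Fin n → Finset ℤ) (j : ℤ) :
    ∑' x : Fin n → ℤ,
        (if (∑ i, x i) = j then ∏ i, (if x i ∈ K i then (1:ℝ≥0∞) else 0) else 0)
      = (((Fintype.piFinset K).filter (fun x => ∑ i, x i = j)).card : ℝ≥0∞) := by
  classical
  rw [tsum_eq_sum (s := Fintype.piFinset K) (fun x hx => by
    obtain ⟨i₀, hi₀⟩ : ∃ i₀, x i₀ ∉ K i₀ := by
      by_contra hcon
      push_neg at hcon
      exact hx (Fintype.mem_piFinset.mpr hcon)
    have hzero : (∏ i, (if x i ∈ K i then (1:ℝ≥0∞) else 0)) = 0 :=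
      Finset.prod_eq_zero (Finset.mem_univ i₀)
        (if_neg hi₀ : (if x i₀ ∈ K i₀ then (1:ℝ≥0∞) else 0) = 0)
    rw [hzero, ite_self])]
  rw [Finset.sum_congr rfl (fun x hx => by
    rw [Finset.prod_congr rfl (fun i _ =>
      if_pos ((Fintype.mem_piFinset.mp hx) i)), Finset.prod_const_one])]
  rw [Finset.sum_boole]

theorem tsum_singleton_measure (m : MeasureTheory.Measure ℤ) :
    ∑' k, m {k} = m Set.univ := by
  have hu : (Set.univ : Set ℤ) = ⋃ x ∈ (Set.univ : Set ℤ), {x} := by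
    ext x; simp
  rw [hu, MeasureTheory.measure_biUnion (Set.to_countable _)
    (fun x _ y _ hxy => Set.disjoint_singleton.mpr hxy)
    (fun x _ => measurableSet_singleton x)]
  rw [tsum_univ (fun x => m {x})]

theorem map_pi_singleton (n : ℕ) (μ : Fin n → MeasureTheory.Measure ℤ)
    [hsf : ∀ i, MeasureTheory.SigmaFinite (μ i)] (j : ℤ) :
    ((MeasureTheory.Measure.pi μ).map (fun x : Fin n → ℤ => ∑ i, x i)) {j}
      = ∑' x : Fin n → ℤ, if (∑ i, x i) = j then ∏ i, μ i {x i} else 0 := by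
  classical
  rw [MeasureTheory.Measure.map_apply (measurable_of_countable _)
    (measurableSet_singleton j)]
  have hset : (fun x : Fin n → ℤ => ∑ i, x i) ⁻¹' {j}
      = ⋃ x ∈ {x : Fin n → ℤ | (∑ i, x i) = j}, {x} := by
    ext x; simp
  rw [hset, MeasureTheory.measure_biUnion (Set.to_countable _)
    (fun x _ y _ hxy => Set.disjoint_singleton.mpr hxy)
    (fun x _ => measurableSet_singleton x)]
  have hsing : ∀ x : Fin n → ℤ, MeasureTheory.Measure.pi μ {x} = ∏ i, μ i {x i} := by
    intro x
    rw [← Set.univ_pi_singleton x, MeasureTheory.Measure.pi_pi]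
  calc ∑' p : ↥{x : Fin n → ℤ | (∑ i, x i) = j}, MeasureTheory.Measure.pi μ {(p : Fin n → ℤ)}
      = ∑' p : ↥{x : Fin n → ℤ | (∑ i, x i) = j}, ∏ i, μ i {(p : Fin n → ℤ) i} :=
        tsum_congr (fun p => hsing (p : Fin n → ℤ))
    _ = ∑' x : Fin n → ℤ,
          Set.indicator {x : Fin n → ℤ | (∑ i, x i) = j} (fun x => ∏ i, μ i {x i}) x :=
        tsum_subtype {x : Fin n → ℤ | (∑ i, x i) = j} (fun x => ∏ i, μ i {x i})
    _ = ∑' x : Fin n → ℤ, if (∑ i, x i) = j then ∏ i, μ i {x i} else 0 := by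
        apply tsum_congr
        intro x
        by_cases hc : (∑ i, x i) = j <;>
          simp [Set.indicator_apply, Set.mem_setOf_eq, hc]

/-- discrete Rogozin-type inequality: if independent integer random variables
have maximal point masses at most `1/lᵢ`, the maximal point mass of their sum is at most
that of a sum of independent uniforms on `{0, …, lᵢ − 1}`. -/
theorem stmt14 (n : ℕ) (l : Fin n → ℕ) (hl : ∀ i, 0 < l i)
    (μ : Fin n → Measure ℤ) (hprob : ∀ i, IsProbabilityMeasure (μ i))
    (hμ : ∀ (i : Fin n) (j : ℤ), μ i {j} ≤ ((l i : ℝ≥0∞))⁻¹)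
    (ν : Fin n → Measure ℤ)
    (hν : ∀ i, ν i = ((l i : ℝ≥0∞))⁻¹ •
      Measure.count.restrict {j : ℤ | 0 ≤ j ∧ j < (l i : ℤ)}) :
    (⨆ j : ℤ, ((Measure.pi μ).map (fun x : Fin n → ℤ => ∑ i, x i)) {j})
      ≤ ⨆ j : ℤ, ((Measure.pi ν).map (fun x : Fin n → ℤ => ∑ i, x i)) {j} := by
  classical
  haveI : ∀ i, SigmaFinite (μ i) := fun i => by
    haveI := hprob i; infer_instance
  have hSfin : ∀ i, {j : ℤ | 0 ≤ j ∧ j < (l i : ℤ)}.Finite := by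
    intro i
    exact (Set.finite_Ico (0:ℤ) (l i)).subset (fun t ht => Set.mem_Ico.mpr ht)
  have hνval : ∀ (i : Fin n) (k : ℤ),
      ν i {k} = ((l i : ℝ≥0∞))⁻¹ *
        (if k ∈ Finset.Ico (0:ℤ) ((l i : ℤ)) then 1 else 0) := by
    intro i k
    rw [hν i, Measure.smul_apply, smul_eq_mul,
      Measure.restrict_apply (measurableSet_singleton k)]
    by_cases hk : (0:ℤ) ≤ k ∧ k < (l i : ℤ)
    · have h1 : {k} ∩ {j : ℤ | 0 ≤ j ∧ j < (l i : ℤ)} = {k} := by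
        apply Set.inter_eq_self_of_subset_left
        intro t ht
        rw [Set.mem_singleton_iff.mp ht]
        exact hk
      rw [h1, Measure.count_singleton, if_pos (Finset.mem_Ico.mpr hk), mul_one]
    · have h1 : {k} ∩ {j : ℤ | 0 ≤ j ∧ j < (l i : ℤ)} = ∅ := by
        apply Set.eq_empty_iff_forall_notMem.mpr
        rintro t ⟨ht1, ht2⟩
        rw [Set.mem_singleton_iff.mp ht1] at ht2
        exact hk ht2
      rw [h1, measure_empty, if_neg (fun hc => hk (Finset.mem_Ico.mp hc)), mul_zero]
  haveI : ∀ i, SigmaFinite (ν i) := by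
    intro i
    haveI : IsFiniteMeasure (ν i) := by
      constructor
      rw [hν i, Measure.smul_apply, smul_eq_mul,
        Measure.restrict_apply MeasurableSet.univ, Set.univ_inter,
        Measure.count_apply_finite _ (hSfin i)]
      exact ENNReal.mul_lt_top
        (ENNReal.inv_lt_top.mpr (by exact_mod_cast hl i)) (ENNReal.natCast_lt_top _)
    infer_instance
  set t₀ : ℤ := (((∑ i, (l i - 1)) / 2 : ℕ) : ℤ) with ht₀
  set Nmax : ℝ≥0∞ := (((Fintype.piFinset fun i => Finset.Ico (0:ℤ) ((l i : ℤ))).filter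
      (fun x => ∑ i, x i = t₀)).card : ℝ≥0∞) with hNmax
  have hf1 : ∀ i, ∑' k, μ i {k} ≤ 1 := by
    intro i
    rw [tsum_singleton_measure (μ i)]
    exact le_of_eq (hprob i).measure_univ
  have hLHS : ∀ j, ((Measure.pi μ).map (fun x : Fin n → ℤ => ∑ i, x i)) {j}
      = solh n (fun i k => μ i {k}) delta0 j := by
    intro j
    rw [map_pi_singleton, solh_delta0]
  have hpeel := peel_all n (fun i k => μ i {k}) l hl (fun i k => hμ i k) hf1 delta0
    (by rw [delta0_total]; exact ENNReal.one_ne_top)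
  have hsupK : (⨆ (K : Fin n → Finset ℤ) (_ : ∀ i, (K i).card = l i) (j : ℤ),
      solh n (fun i k => if k ∈ K i then 1 else 0) delta0 j) ≤ Nmax := by
    apply iSup_le; intro K; apply iSup_le; intro hKc; apply iSup_le; intro j
    rw [solh_delta0, tsum_ind_count, hNmax]
    apply Nat.cast_le.mpr
    exact (count_sol_le l hl K hKc j).trans (count_nat_le_int l)
  have hRHS : ((Measure.pi ν).map (fun x : Fin n → ℤ => ∑ i, x i)) {t₀}
      = (∏ i, ((l i : ℝ≥0∞))⁻¹) * Nmax := by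
    rw [map_pi_singleton]
    have hterm : ∀ x : Fin n → ℤ,
        (if (∑ i, x i) = t₀ then ∏ i, ν i {x i} else 0)
        = (∏ i, ((l i : ℝ≥0∞))⁻¹) *
          (if (∑ i, x i) = t₀ then
            ∏ i, (if x i ∈ Finset.Ico (0:ℤ) ((l i : ℤ)) then (1:ℝ≥0∞) else 0) else 0) := by
      intro x
      have hp : (∏ i, ν i {x i}) = (∏ i, ((l i : ℝ≥0∞))⁻¹) *
          ∏ i, (if x i ∈ Finset.Ico (0:ℤ) ((l i : ℤ)) then (1:ℝ≥0∞) else 0) := by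
        rw [Finset.prod_congr rfl (fun i _ => hνval i (x i)), Finset.prod_mul_distrib]
      by_cases hc : (∑ i, x i) = t₀
      · rw [if_pos hc, if_pos hc, hp]
      · rw [if_neg hc, if_neg hc, mul_zero]
    rw [tsum_congr hterm, ENNReal.tsum_mul_left, tsum_ind_count]
  calc (⨆ j : ℤ, ((Measure.pi μ).map (fun x : Fin n → ℤ => ∑ i, x i)) {j})
      = ⨆ j, solh n (fun i k => μ i {k}) delta0 j := iSup_congr hLHS
    _ ≤ (∏ i, ((l i : ℝ≥0∞))⁻¹) *
        ⨆ (K : Fin n → Finset ℤ) (_ : ∀ i, (K i).card = l i) (j : ℤ),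
          solh n (fun i k => if k ∈ K i then 1 else 0) delta0 j := hpeel
    _ ≤ (∏ i, ((l i : ℝ≥0∞))⁻¹) * Nmax := mul_le_mul_right hsupK _
    _ = ((Measure.pi ν).map (fun x : Fin n → ℤ => ∑ i, x i)) {t₀} := hRHS.symm
    _ ≤ ⨆ j : ℤ, ((Measure.pi ν).map (fun x : Fin n → ℤ => ∑ i, x i)) {j} :=
        le_iSup (fun j : ℤ => ((Measure.pi ν).map (fun x : Fin n → ℤ => ∑ i, x i)) {j}) t₀
end

section
/- Let G be a countable discrete group with counting reference measure, and let X_1, …, X_n be independent G-valued random variables, each with finite support. Write M(X_i) = max_{g∈G} P(X_i = g). Then max_{g∈G} P(X_1 ⋯ X_n = g) ≤ sup max_{g∈G} P(V_1 ⋯ V_n = g), where the supremum is over all tuples of independent G-valued random variables V_1, …, V_n such that V_i is uniformly distributed on some subset of G of cardinality ⌊1/M(X_i)⌋. -/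
open MeasureTheory
open scoped ENNReal NNReal

lemma meas_apply_countable {α : Type*} [MeasurableSpace α] [Countable α]
    [DiscreteMeasurableSpace α] (μ : Measure α) (s : Set α) :
    μ s = ∑' x : s, μ {(x : α)} := by
  have := tsum_measure_preimage_singleton (μ := μ) (s.to_countable) (f := id)
    (fun y _ => MeasurableSet.of_discrete)
  simpa using this.symm

lemma mapProd_apply {G : Type*} [Monoid G] [Countable G] [MeasurableSpace G]
    [DiscreteMeasurableSpace G] {n : ℕ} (m : Fin n → Measure G) [∀ i, SigmaFinite (m i)]
    (g : G) :
    ((Measure.pi m).map (fun x : Fin n → G => (List.ofFn x).prod)) {g}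
      = ∑' x : ((fun x : Fin n → G => (List.ofFn x).prod) ⁻¹' {g}),
          ∏ i, m i {(x : Fin n → G) i} := by
  rw [Measure.map_apply Measurable.of_discrete MeasurableSet.of_discrete,
    meas_apply_countable]
  congr 1
  funext x
  rw [← Set.univ_pi_singleton, Measure.pi_pi]

lemma exists_topk {α : Type*} [DecidableEq α] (f : α → ℝ≥0) (P : Finset α) :
    ∀ k ≤ P.card, ∃ S ⊆ P, S.card = k ∧ ∀ x ∈ S, ∀ y ∈ P \ S, f y ≤ f x := by
  intro k
  induction k with
  | zero => intro _; exact ⟨∅, by simp⟩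
  | succ k ih =>
    intro hk
    obtain ⟨S, hSP, hcard, htop⟩ := ih (Nat.le_of_succ_le hk)
    have hne : (P \ S).Nonempty := by
      rw [← Finset.card_pos, Finset.card_sdiff_of_subset hSP, hcard]
      omega
    obtain ⟨y₀, hy₀, hmax⟩ := Finset.exists_max_image (P \ S) f hne
    refine ⟨insert y₀ S, ?_, ?_, ?_⟩
    · exact Finset.insert_subset (Finset.mem_sdiff.mp hy₀).1 hSP
    · rw [Finset.card_insert_of_notMem (Finset.mem_sdiff.mp hy₀).2, hcard]
    · intro x hx y hy
      have hyS : y ∈ P \ S := by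
        rw [Finset.mem_sdiff] at hy ⊢
        exact ⟨hy.1, fun h => hy.2 (Finset.mem_insert_of_mem h)⟩
      rcases Finset.mem_insert.mp hx with rfl | hx
      · exact hmax y hyS
      · exact htop x hx y hyS
lemma decomp {α : Type*} [DecidableEq α] (k : ℕ) (hk : 0 < k) :
    ∀ (N : ℕ) (F : Finset α) (f : α → ℝ≥0),
      (F.filter fun g => 0 < f g ∧ f g < (k : ℝ≥0)⁻¹).card ≤ N →
      (∀ g ∉ F, f g = 0) → (∑ g ∈ F, f g = 1) → (∀ g, f g ≤ (k : ℝ≥0)⁻¹) →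
      ∃ (m : ℕ) (c : Fin m → ℝ≥0) (S : Fin m → Finset α),
        (∀ t, (S t).card = k) ∧ (∑ t, c t = 1) ∧
        ∀ g, f g = ∑ t, c t * (if g ∈ S t then (k : ℝ≥0)⁻¹ else 0) := by
  have hk0 : ((k : ℝ≥0)) ≠ 0 := Nat.cast_ne_zero.mpr hk.ne'
  have hkinv : (0:ℝ≥0) < (k : ℝ≥0)⁻¹ := by positivity
  intro N
  induction N with
  | zero =>
    intro F f hcard hsupp hsum hle
    rw [Nat.le_zero, Finset.card_eq_zero, Finset.filter_eq_empty_iff] at hcard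
    have hvals : ∀ g, f g = 0 ∨ f g = (k : ℝ≥0)⁻¹ := by
      intro g
      by_cases hgF : g ∈ F
      · rcases eq_or_lt_of_le (hle g) with h | h
        · exact Or.inr h
        · have := hcard hgF
          rcases (pos_iff_ne_zero (a := f g)).symm.mp.mt (fun hpos => this ⟨hpos, h⟩) with h0
          exact Or.inl (by simpa using h0)
      · exact Or.inl (hsupp g hgF)
    set S : Finset α := F.filter (fun g => f g ≠ 0) with hS
    have hsum' : ∑ g ∈ S, f g = 1 := by rw [hS, Finset.sum_filter_ne_zero]; exact hsum
    have hSval : ∀ g ∈ S, f g = (k : ℝ≥0)⁻¹ := by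
      intro g hg
      rcases hvals g with h | h
      · exact absurd h (Finset.mem_filter.mp hg).2
      · exact h
    have hsum'' : (S.card : ℝ≥0) * (k : ℝ≥0)⁻¹ = 1 := by
      rw [← hsum', Finset.sum_congr rfl hSval, Finset.sum_const, nsmul_eq_mul]
    have hcardk : S.card = k := by
      have : (S.card : ℝ≥0) = (k : ℝ≥0) := by
        have hk1 : (k : ℝ≥0) * (k : ℝ≥0)⁻¹ = 1 := mul_inv_cancel₀ hk0
        exact mul_right_cancel₀ (by positivity) (hsum''.trans hk1.symm)
      exact_mod_cast this
    refine ⟨1, fun _ => 1, fun _ => S, fun _ => hcardk, by simp, ?_⟩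
    intro g
    rw [Fin.sum_univ_one, one_mul]
    by_cases hgS : g ∈ S
    · rw [if_pos hgS]; exact hSval g hgS
    · rw [if_neg hgS]
      by_cases hgF : g ∈ F
      · by_contra hne
        exact hgS (Finset.mem_filter.mpr ⟨hgF, hne⟩)
      · exact hsupp g hgF
  | succ N ih =>
    intro F f hcard hsupp hsum hle
    by_cases hN : (F.filter fun g => 0 < f g ∧ f g < (k : ℝ≥0)⁻¹).card ≤ N
    · exact ih F f hN hsupp hsum hle
    -- main case
    have hfilne : (F.filter fun g => 0 < f g ∧ f g < (k : ℝ≥0)⁻¹).Nonempty := by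
      rw [← Finset.card_pos]; omega
    obtain ⟨g₀, hg₀⟩ := hfilne
    obtain ⟨hg₀F, hg₀pos, hg₀lt⟩ : g₀ ∈ F ∧ 0 < f g₀ ∧ f g₀ < (k : ℝ≥0)⁻¹ := by
      have := Finset.mem_filter.mp hg₀; exact ⟨this.1, this.2.1, this.2.2⟩
    set P : Finset α := F.filter (fun g => f g ≠ 0) with hP
    have hPF : P ⊆ F := Finset.filter_subset _ _
    have hsumP : ∑ g ∈ P, f g = 1 := by rw [hP, Finset.sum_filter_ne_zero]; exact hsum
    have hg₀P : g₀ ∈ P := Finset.mem_filter.mpr ⟨hg₀F, hg₀pos.ne'⟩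
    have hPk : k < P.card := by
      have hlt : (1 : ℝ≥0) < P.card * (k : ℝ≥0)⁻¹ := by
        calc (1:ℝ≥0) = ∑ g ∈ P, f g := hsumP.symm
        _ < ∑ _g ∈ P, (k : ℝ≥0)⁻¹ :=
            Finset.sum_lt_sum (fun i _ => hle i) ⟨g₀, hg₀P, hg₀lt⟩
        _ = P.card * (k : ℝ≥0)⁻¹ := by rw [Finset.sum_const, nsmul_eq_mul]
      have : (k : ℝ≥0) < P.card := by
        have := mul_lt_mul_of_pos_right hlt (show (0:ℝ≥0) < k by positivity)
        rwa [one_mul, mul_assoc, inv_mul_cancel₀ hk0, mul_one] at this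
      exact_mod_cast this
    obtain ⟨S, hSP, hScard, htop⟩ := exists_topk f P k hPk.le
    have hSF : S ⊆ F := hSP.trans hPF
    have hSne : S.Nonempty := Finset.card_pos.mp (hScard ▸ hk)
    have hFSne : (F \ S).Nonempty := by
      obtain ⟨y, hy⟩ : (P \ S).Nonempty := by
        rw [← Finset.card_pos, Finset.card_sdiff_of_subset hSP, hScard]; omega
      exact ⟨y, Finset.mem_sdiff.mpr ⟨hPF (Finset.mem_sdiff.mp hy).1, (Finset.mem_sdiff.mp hy).2⟩⟩
    set a : ℝ≥0 := S.inf' hSne f with ha_def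
    set M : ℝ≥0 := (F \ S).sup' hFSne f with hM_def
    have hfa : ∀ x ∈ S, a ≤ f x := fun x hx => Finset.inf'_le f hx
    have hfM : ∀ y ∈ F \ S, f y ≤ M := fun y hy => Finset.le_sup' f hy
    have ha : 0 < a := by
      obtain ⟨x, hxS, hax⟩ := Finset.exists_mem_eq_inf' hSne f
      rw [ha_def, hax]
      exact pos_iff_ne_zero.mpr (Finset.mem_filter.mp (hSP hxS)).2
    have hMf : ∀ x ∈ S, M ≤ f x := by
      intro x hx
      obtain ⟨y, hyFS, hMy⟩ := Finset.exists_mem_eq_sup' hFSne f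
      rw [hM_def, hMy]
      by_cases hyP : y ∈ P
      · exact htop x hx y (Finset.mem_sdiff.mpr ⟨hyP, (Finset.mem_sdiff.mp hyFS).2⟩)
      · have : f y = 0 := by
          by_contra hne
          exact hyP (Finset.mem_filter.mpr ⟨(Finset.mem_sdiff.mp hyFS).1, hne⟩)
        rw [this]; exact zero_le
    have hMpos : 0 < M := by
      obtain ⟨y, hy⟩ : (P \ S).Nonempty := by
        rw [← Finset.card_pos, Finset.card_sdiff_of_subset hSP, hScard]; omega
      obtain ⟨hyP, hyS⟩ := Finset.mem_sdiff.mp hy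
      calc (0:ℝ≥0) < f y := pos_iff_ne_zero.mpr (Finset.mem_filter.mp hyP).2
      _ ≤ M := hfM y (Finset.mem_sdiff.mpr ⟨hPF hyP, hyS⟩)
    -- (k+1) M ≤ 1 and M < 1/k
    have hM1 : (k : ℝ≥0) * M + M ≤ 1 := by
      obtain ⟨y, hyFS, hMy⟩ := Finset.exists_mem_eq_sup' hFSne f
      obtain ⟨hyF, hyS⟩ := Finset.mem_sdiff.mp hyFS
      have h1 : (k : ℝ≥0) * M ≤ ∑ x ∈ S, f x := by
        calc (k : ℝ≥0) * M = ∑ _x ∈ S, M := by rw [Finset.sum_const, nsmul_eq_mul, hScard]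
        _ ≤ ∑ x ∈ S, f x := Finset.sum_le_sum hMf
      have h2 : ∑ x ∈ S, f x + f y = ∑ x ∈ insert y S, f x := by
        rw [Finset.sum_insert hyS, add_comm]
      have hMy' : M = f y := hM_def.trans hMy
      calc (k : ℝ≥0) * M + M ≤ ∑ x ∈ S, f x + f y :=
            add_le_add h1 (le_of_eq hMy')
      _ = ∑ x ∈ insert y S, f x := h2
      _ ≤ ∑ x ∈ F, f x :=
          Finset.sum_le_sum_of_subset (Finset.insert_subset hyF hSF)
      _ = 1 := hsum
    have hMlt : M < (k : ℝ≥0)⁻¹ := by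
      by_contra hcon
      push_neg at hcon
      have h1 : (1:ℝ≥0) + (k : ℝ≥0)⁻¹ ≤ 1 := by
        calc (1:ℝ≥0) + (k : ℝ≥0)⁻¹ = (k : ℝ≥0) * (k : ℝ≥0)⁻¹ + (k : ℝ≥0)⁻¹ := by
              rw [mul_inv_cancel₀ hk0]
        _ ≤ (k : ℝ≥0) * M + M := add_le_add (mul_le_mul_of_nonneg_left hcon (zero_le)) hcon
        _ ≤ 1 := hM1
      exact hkinv.not_ge (by simpa using h1)
    have hkM1 : (k : ℝ≥0) * M < 1 := by
      calc (k : ℝ≥0) * M < (k : ℝ≥0) * (k : ℝ≥0)⁻¹ :=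
            mul_lt_mul_of_pos_left hMlt (by positivity)
      _ = 1 := mul_inv_cancel₀ hk0
    set c : ℝ≥0 := min ((k : ℝ≥0) * a) (1 - (k : ℝ≥0) * M) with hc_def
    have hcka : c ≤ (k : ℝ≥0) * a := min_le_left _ _
    have hckM : c ≤ 1 - (k : ℝ≥0) * M := min_le_right _ _
    have hcpos : 0 < c := lt_min (by positivity) (tsub_pos_of_lt hkM1)
    have hc1 : c < 1 := lt_of_le_of_lt hckM (tsub_lt_self one_pos (by positivity))
    have h1c : (0:ℝ≥0) < 1 - c := tsub_pos_of_lt hc1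
    have h1c' : (1:ℝ≥0) - c ≠ 0 := h1c.ne'
    set u : α → ℝ≥0 := fun g => if g ∈ S then (k : ℝ≥0)⁻¹ else 0 with hu_def
    have hule : ∀ g, u g ≤ (k : ℝ≥0)⁻¹ := by
      intro g; rw [hu_def]; dsimp only; split <;> simp
    have hcu : ∀ g, c * u g ≤ f g := by
      intro g
      rw [hu_def]; dsimp only
      by_cases hgS : g ∈ S
      · rw [if_pos hgS]
        calc c * (k : ℝ≥0)⁻¹ ≤ ((k : ℝ≥0) * a) * (k : ℝ≥0)⁻¹ :=
              mul_le_mul_of_nonneg_right hcka (zero_le)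
        _ = a := by rw [mul_comm, ← mul_assoc, inv_mul_cancel₀ hk0, one_mul]
        _ ≤ f g := hfa g hgS
      · rw [if_neg hgS, mul_zero]; exact zero_le
    set q : α → ℝ≥0 := fun g => (f g - c * u g) / (1 - c) with hq_def
    have hqf : ∀ g, f g = c * u g + (1 - c) * q g := by
      intro g
      rw [hq_def]; dsimp only
      rw [mul_comm ((1:ℝ≥0) - c), div_mul_cancel₀ _ h1c', add_tsub_cancel_of_le (hcu g)]
    have hqsupp : ∀ g ∉ F, q g = 0 := by
      intro g hg
      rw [hq_def]; dsimp only
      rw [tsub_eq_zero_of_le (by rw [hsupp g hg]; exact zero_le), zero_div]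
    have hsumu : ∑ g ∈ F, u g = 1 := by
      rw [hu_def]
      dsimp only
      rw [Finset.sum_ite_mem, Finset.inter_eq_right.mpr hSF, Finset.sum_const, nsmul_eq_mul,
        hScard, mul_inv_cancel₀ hk0]
    have hqsum : ∑ g ∈ F, q g = 1 := by
      rw [hq_def]; dsimp only
      rw [← Finset.sum_div, Finset.sum_tsub_distrib F (fun g _ => hcu g), hsum,
        ← Finset.mul_sum, hsumu, mul_one, div_self h1c']
    have hqle : ∀ g, q g ≤ (k : ℝ≥0)⁻¹ := by
      intro g
      rw [hq_def]; dsimp only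
      by_cases hgS : g ∈ S
      · have hug : u g = (k : ℝ≥0)⁻¹ := if_pos hgS
        rw [hug]
        calc (f g - c * (k : ℝ≥0)⁻¹) / (1 - c)
            ≤ ((k : ℝ≥0)⁻¹ - c * (k : ℝ≥0)⁻¹) / (1 - c) := by
              gcongr
              exact hle g
        _ = ((1 - c) * (k : ℝ≥0)⁻¹) / (1 - c) := by rw [tsub_mul, one_mul]
        _ = (k : ℝ≥0)⁻¹ := by rw [mul_comm, mul_div_assoc, div_self h1c', mul_one]
      · have hug : u g = 0 := if_neg hgS
        rw [hug, mul_zero, tsub_zero]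
        have hfgM : f g ≤ M := by
          by_cases hgF : g ∈ F
          · exact hfM g (Finset.mem_sdiff.mpr ⟨hgF, hgS⟩)
          · rw [hsupp g hgF]; exact zero_le
        have hkM1c : (k : ℝ≥0) * M ≤ 1 - c :=
          (le_tsub_iff_left hc1.le).mpr ((le_tsub_iff_right hkM1.le).mp hckM)
        rw [div_le_iff₀ h1c]
        calc f g ≤ M := hfgM
        _ = (k : ℝ≥0)⁻¹ * ((k : ℝ≥0) * M) := by
              rw [← mul_assoc, inv_mul_cancel₀ hk0, one_mul]
        _ ≤ (k : ℝ≥0)⁻¹ * (1 - c) := mul_le_mul_of_nonneg_left hkM1c (zero_le)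
        _ = (k : ℝ≥0)⁻¹ * (1 - c) := rfl
    -- strict decrease of the filter
    have hss : (F.filter fun g => 0 < q g ∧ q g < (k : ℝ≥0)⁻¹)
        ⊂ (F.filter fun g => 0 < f g ∧ f g < (k : ℝ≥0)⁻¹) := by
      constructor
      · intro g hg
        obtain ⟨hgF, hq0, hqk⟩ : g ∈ F ∧ 0 < q g ∧ q g < (k : ℝ≥0)⁻¹ := by
          have := Finset.mem_filter.mp hg; exact ⟨this.1, this.2.1, this.2.2⟩
        refine Finset.mem_filter.mpr ⟨hgF, ?_, ?_⟩
        · calc (0:ℝ≥0) < (1 - c) * q g := by positivity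
          _ ≤ f g := by rw [hqf g]; exact le_add_self
        · calc f g = c * u g + (1 - c) * q g := hqf g
          _ < c * (k : ℝ≥0)⁻¹ + (1 - c) * (k : ℝ≥0)⁻¹ :=
              add_lt_add_of_le_of_lt
                (mul_le_mul_of_nonneg_left (hule g) (zero_le))
                (mul_lt_mul_of_pos_left hqk h1c)
          _ = (c + (1 - c)) * (k : ℝ≥0)⁻¹ := by rw [add_mul]
          _ = (k : ℝ≥0)⁻¹ := by rw [add_tsub_cancel_of_le hc1.le, one_mul]
      · intro hsub
        by_cases hmin : (k : ℝ≥0) * a ≤ 1 - (k : ℝ≥0) * M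
        · -- c = k * a ; the argmin of S leaves the filter
          have hc_eq : c = (k : ℝ≥0) * a := min_eq_left hmin
          obtain ⟨x₀, hx₀S, hax₀⟩ := Finset.exists_mem_eq_inf' hSne f
          have hfx₀ : f x₀ = a := (ha_def.trans hax₀).symm
          have halt : a < (k : ℝ≥0)⁻¹ := by
            by_contra hcon
            push_neg at hcon
            have : (1:ℝ≥0) ≤ c := by
              rw [hc_eq]
              calc (1:ℝ≥0) = (k : ℝ≥0) * (k : ℝ≥0)⁻¹ := (mul_inv_cancel₀ hk0).symm
              _ ≤ (k : ℝ≥0) * a := mul_le_mul_of_nonneg_left hcon (zero_le)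
            exact (lt_irrefl _ (this.trans_lt hc1))
          have hx₀mem : x₀ ∈ F.filter fun g => 0 < f g ∧ f g < (k : ℝ≥0)⁻¹ :=
            Finset.mem_filter.mpr ⟨hSF hx₀S, by rw [hfx₀]; exact ⟨ha, halt⟩⟩
          have hx₀mem' := hsub hx₀mem
          obtain ⟨-, hq0, -⟩ : x₀ ∈ F ∧ 0 < q x₀ ∧ q x₀ < (k : ℝ≥0)⁻¹ := by
            have := Finset.mem_filter.mp hx₀mem'; exact ⟨this.1, this.2.1, this.2.2⟩
          have : q x₀ = 0 := by
            rw [hq_def]; dsimp only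
            have hux₀ : u x₀ = (k : ℝ≥0)⁻¹ := if_pos hx₀S
            rw [hux₀, hfx₀, hc_eq, mul_assoc, mul_comm a, ← mul_assoc,
              mul_inv_cancel₀ hk0, one_mul, tsub_self, zero_div]
          exact (this ▸ hq0).false
        · -- c = 1 - k*M ; the argmax outside S leaves the filter
          push_neg at hmin
          have hc_eq : c = 1 - (k : ℝ≥0) * M := min_eq_right hmin.le
          obtain ⟨y₁, hy₁FS, hMy₁⟩ := Finset.exists_mem_eq_sup' hFSne f
          have hfy₁ : f y₁ = M := (hM_def.trans hMy₁).symm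
          obtain ⟨hy₁F, hy₁S⟩ := Finset.mem_sdiff.mp hy₁FS
          have hy₁mem : y₁ ∈ F.filter fun g => 0 < f g ∧ f g < (k : ℝ≥0)⁻¹ :=
            Finset.mem_filter.mpr ⟨hy₁F, by rw [hfy₁]; exact ⟨hMpos, hMlt⟩⟩
          have hy₁mem' := hsub hy₁mem
          obtain ⟨-, -, hqk⟩ : y₁ ∈ F ∧ 0 < q y₁ ∧ q y₁ < (k : ℝ≥0)⁻¹ := by
            have := Finset.mem_filter.mp hy₁mem'; exact ⟨this.1, this.2.1, this.2.2⟩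
          have h1cM : (1:ℝ≥0) - c = (k : ℝ≥0) * M := by
            rw [hc_eq, tsub_tsub_cancel_of_le hkM1.le]
          have : q y₁ = (k : ℝ≥0)⁻¹ := by
            rw [hq_def]; dsimp only
            have huy₁ : u y₁ = 0 := if_neg hy₁S
            rw [huy₁, mul_zero, tsub_zero, hfy₁, h1cM]
            rw [div_eq_iff (by positivity)]
            rw [← mul_assoc, inv_mul_cancel₀ hk0, one_mul]
          exact (lt_irrefl _ (this ▸ hqk))
    have hqcard : (F.filter fun g => 0 < q g ∧ q g < (k : ℝ≥0)⁻¹).card ≤ N := by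
      have := Finset.card_lt_card hss
      omega
    obtain ⟨m', c', S', hS'card, hc'sum, hdec⟩ := ih F q hqcard hqsupp hqsum hqle
    refine ⟨m' + 1, Fin.cons c (fun t => (1 - c) * c' t), Fin.cons S S', ?_, ?_, ?_⟩
    · intro t
      refine Fin.cases ?_ ?_ t
      · exact hScard
      · exact hS'card
    · rw [Fin.sum_cons, ← Finset.mul_sum, hc'sum, mul_one, add_tsub_cancel_of_le hc1.le]
    · intro g
      rw [Fin.sum_univ_succ]
      simp only [Fin.cons_zero, Fin.cons_succ]
      have : ∑ t : Fin m', (1 - c) * c' t * (if g ∈ S' t then (k : ℝ≥0)⁻¹ else 0)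
          = (1 - c) * q g := by
        rw [hdec g, Finset.mul_sum]
        exact Finset.sum_congr rfl fun t _ => by ring
      rw [this, ← hqf g]

/-- weak Rogozin inequality in a countable discrete group: the maximal point
mass of a product of independent finitely supported random variables is at most the supremum
of maximal point masses of products of uniforms on sets of cardinality `⌊1/M(Xᵢ)⌋`. -/
theorem stmt15 {G : Type*} [Group G] [Countable G] [MeasurableSpace G]
    [DiscreteMeasurableSpace G]
    (n : ℕ) (μ : Fin n → Measure G) (hprob : ∀ i, IsProbabilityMeasure (μ i))
    (hfin : ∀ i, ∃ F : Finset G, μ i (↑F)ᶜ = 0) :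
    (⨆ g : G, ((Measure.pi μ).map (fun x : Fin n → G => (List.ofFn x).prod)) {g})
      ≤ ⨆ (ν : Fin n → Measure G) (_ : ∀ i, ∃ S : Finset G,
            S.card = Nat.floor ((⨆ g : G, μ i {g})⁻¹.toReal) ∧
            ν i = (S.card : ℝ≥0∞)⁻¹ • Measure.count.restrict (↑S : Set G)),
          ⨆ g : G, ((Measure.pi ν).map (fun x : Fin n → G => (List.ofFn x).prod)) {g} := by
  classical
  haveI : ∀ i, SigmaFinite (μ i) := fun i => inferInstance
  choose F hF using hfin
  set M : Fin n → ℝ≥0∞ := fun i => ⨆ g : G, μ i {g} with hM_def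
  set k : Fin n → ℕ := fun i => Nat.floor ((M i)⁻¹.toReal) with hk_def
  -- basic facts
  have hμF : ∀ i, μ i (↑(F i)) = 1 := by
    intro i
    have h := measure_add_measure_compl (μ := μ i) (s := (↑(F i) : Set G))
      MeasurableSet.of_discrete
    rw [hF i, add_zero, measure_univ] at h
    exact h
  have hsumF : ∀ i, ∑ g ∈ F i, μ i {g} = 1 := by
    intro i
    have h := sum_measure_preimage_singleton (μ := μ i) (f := id) (F i)
      (fun y _ => MeasurableSet.of_discrete)
    simpa [hμF i] using h
  have hMle : ∀ i g, μ i {g} ≤ M i := fun i g => le_iSup (fun g : G => μ i {g}) g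
  have hMpos : ∀ i, 0 < M i := by
    intro i
    by_contra hcon
    push_neg at hcon
    rw [le_zero_iff] at hcon
    have : ∀ g, μ i {g} = 0 := fun g => le_antisymm (hcon ▸ hMle i g) (zero_le)
    have h0 : (∑ g ∈ F i, μ i {g}) = 0 := Finset.sum_eq_zero fun g _ => this g
    rw [hsumF i] at h0
    exact one_ne_zero h0
  have hM1 : ∀ i, M i ≤ 1 := fun i => iSup_le fun g => prob_le_one
  have hMinv_ne_top : ∀ i, (M i)⁻¹ ≠ ∞ := fun i => ENNReal.inv_ne_top.mpr (hMpos i).ne'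
  have hk1 : ∀ i, 0 < k i := by
    intro i
    have h1 : (1 : ℝ≥0∞) ≤ (M i)⁻¹ := by
      have := ENNReal.inv_le_inv.mpr (hM1 i)
      simpa using this
    have h2 : (1 : ℝ) ≤ ((M i)⁻¹).toReal := by
      have := ENNReal.toReal_mono (hMinv_ne_top i) h1
      simpa using this
    exact Nat.le_floor (by exact_mod_cast h2 : ((1:ℕ) : ℝ) ≤ ((M i)⁻¹).toReal)
  have hk0 : ∀ i, ((k i : ℝ≥0)) ≠ 0 := fun i => Nat.cast_ne_zero.mpr (hk1 i).ne'
  have hatom : ∀ i g, μ i {g} ≤ ((k i : ℝ≥0∞))⁻¹ := by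
    intro i g
    have h1 : ((k i : ℝ)) ≤ ((M i)⁻¹).toReal := Nat.floor_le ENNReal.toReal_nonneg
    have h2 : ((k i : ℝ≥0∞)) ≤ (M i)⁻¹ := by
      rw [← ENNReal.ofReal_toReal (hMinv_ne_top i), ← ENNReal.ofReal_natCast]
      exact ENNReal.ofReal_le_ofReal h1
    have h3 : M i ≤ ((k i : ℝ≥0∞))⁻¹ := ENNReal.le_inv_iff_le_inv.mp h2
    exact (hMle i g).trans h3
  -- the NNReal densities
  set f : Fin n → G → ℝ≥0 := fun i g => (μ i {g}).toNNReal with hf_def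
  have hcoe : ∀ i g, ((f i g : ℝ≥0∞)) = μ i {g} :=
    fun i g => ENNReal.coe_toNNReal (measure_ne_top _ _)
  have hfs : ∀ i, ∀ g ∉ F i, f i g = 0 := by
    intro i g hg
    have : μ i {g} = 0 :=
      measure_mono_null (by simpa using hg : ({g} : Set G) ⊆ (↑(F i))ᶜ) (hF i)
    rw [hf_def]; dsimp only; rw [this]; simp
  have hfsum : ∀ i, ∑ g ∈ F i, f i g = 1 := by
    intro i
    have : ((∑ g ∈ F i, f i g : ℝ≥0) : ℝ≥0∞) = ((1 : ℝ≥0) : ℝ≥0∞) := by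
      rw [ENNReal.coe_finset_sum]
      simp only [hcoe]
      rw [hsumF i, ENNReal.coe_one]
    exact_mod_cast this
  have hfle : ∀ i g, f i g ≤ ((k i : ℝ≥0))⁻¹ := by
    intro i g
    have h := hatom i g
    rw [← hcoe i g] at h
    rw [← ENNReal.coe_natCast, ← ENNReal.coe_inv (hk0 i)] at h
    exact_mod_cast h
  -- decompose each density as a mixture of uniforms on k i-element sets
  have hdec : ∀ i, ∃ (m : ℕ) (c : Fin m → ℝ≥0) (S : Fin m → Finset G),
      (∀ t, (S t).card = k i) ∧ (∑ t, c t = 1) ∧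
      ∀ g, f i g = ∑ t, c t * (if g ∈ S t then ((k i : ℝ≥0))⁻¹ else 0) :=
    fun i => decomp (k i) (hk1 i) _ (F i) (f i) le_rfl (hfs i) (hfsum i) (fun g => hfle i g)
  choose m c S hScard hcsum hfdec using hdec
  have hν_atom : ∀ (i) (t : Fin (m i)) (a : G),
      ((((S i t).card : ℝ≥0∞))⁻¹ • Measure.count.restrict (↑(S i t) : Set G)) {a}
        = (if a ∈ S i t then ((k i : ℝ≥0∞))⁻¹ else 0) := by
    intro i t a
    rw [Measure.smul_apply, Measure.restrict_apply MeasurableSet.of_discrete, smul_eq_mul]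
    by_cases ha : a ∈ S i t
    · rw [if_pos ha]
      have h1 : ({a} : Set G) ∩ ↑(S i t) = {a} := Set.inter_eq_left.mpr (by simpa using ha)
      rw [h1, Measure.count_singleton, mul_one, hScard i t]
    · rw [if_neg ha]
      have h1 : ({a} : Set G) ∩ ↑(S i t) = ∅ := by
        apply Set.eq_empty_of_forall_notMem
        rintro x ⟨hx1, hx2⟩
        rw [Set.mem_singleton_iff] at hx1
        subst hx1
        exact ha (by simpa using hx2)
      rw [h1, measure_empty, mul_zero]
  have hcard_ne : ∀ (i) (t : Fin (m i)), (((S i t).card : ℝ≥0∞)) ≠ 0 := by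
    intro i t
    have := hScard i t
    have := hk1 i
    simp only [ne_eq, Nat.cast_eq_zero]
    omega
  have hν_prob : ∀ (i) (t : Fin (m i)),
      IsProbabilityMeasure
        ((((S i t).card : ℝ≥0∞))⁻¹ • Measure.count.restrict (↑(S i t) : Set G)) := by
    intro i t
    constructor
    rw [Measure.smul_apply, Measure.restrict_apply MeasurableSet.univ, Set.univ_inter,
      Measure.count_apply_finset, smul_eq_mul,
      ENNReal.inv_mul_cancel (hcard_ne i t) (ENNReal.natCast_ne_top _)]
  refine iSup_le fun g => ?_
  rw [mapProd_apply]
  have key : ∀ x : Fin n → G, (∏ i, μ i {x i})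
      = ∑ p : ∀ i, Fin (m i), ∏ i, ((c i (p i) : ℝ≥0∞) *
          (if x i ∈ S i (p i) then ((k i : ℝ≥0∞))⁻¹ else 0)) := by
    intro x
    have h1 : ∀ i : Fin n, μ i {x i} = ∑ t : Fin (m i), ((c i t : ℝ≥0∞) *
        (if x i ∈ S i t then ((k i : ℝ≥0∞))⁻¹ else 0)) := by
      intro i
      rw [← hcoe i (x i), hfdec i (x i), ENNReal.coe_finset_sum]
      refine Finset.sum_congr rfl fun t _ => ?_
      rw [ENNReal.coe_mul]
      congr 1
      split_ifs with h
      · rw [ENNReal.coe_inv (hk0 i), ENNReal.coe_natCast]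
      · simp
    rw [Finset.prod_congr rfl fun i _ => h1 i]
    exact Fintype.prod_sum fun (i : Fin n) (t : Fin (m i)) => ((c i t : ℝ≥0∞) *
      (if x i ∈ S i t then ((k i : ℝ≥0∞))⁻¹ else 0))
  set R := ⨆ (ν : Fin n → Measure G) (_ : ∀ i, ∃ S : Finset G,
        S.card = Nat.floor ((⨆ g : G, μ i {g})⁻¹.toReal) ∧
        ν i = (S.card : ℝ≥0∞)⁻¹ • Measure.count.restrict (↑S : Set G)),
      ⨆ g : G, ((Measure.pi ν).map (fun x : Fin n → G => (List.ofFn x).prod)) {g} with hR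
  calc ∑' x : ((fun x : Fin n → G => (List.ofFn x).prod) ⁻¹' {g}),
          ∏ i, μ i {(x : Fin n → G) i}
      = ∑' x : ((fun x : Fin n → G => (List.ofFn x).prod) ⁻¹' {g}),
          ∑ p : ∀ i, Fin (m i), ∏ i, ((c i (p i) : ℝ≥0∞) *
            (if (x : Fin n → G) i ∈ S i (p i) then ((k i : ℝ≥0∞))⁻¹ else 0)) :=
        tsum_congr fun x => key x
    _ = ∑ p : ∀ i, Fin (m i), ∑' x : ((fun x : Fin n → G => (List.ofFn x).prod) ⁻¹' {g}),
          ∏ i, ((c i (p i) : ℝ≥0∞) *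
            (if (x : Fin n → G) i ∈ S i (p i) then ((k i : ℝ≥0∞))⁻¹ else 0)) :=
        Summable.tsum_finsetSum (fun _ _ => ENNReal.summable)
    _ = ∑ p : ∀ i, Fin (m i), (∏ i, (c i (p i) : ℝ≥0∞)) *
          ∑' x : ((fun x : Fin n → G => (List.ofFn x).prod) ⁻¹' {g}),
            ∏ i, (if (x : Fin n → G) i ∈ S i (p i) then ((k i : ℝ≥0∞))⁻¹ else 0) := by
        refine Finset.sum_congr rfl fun p _ => ?_
        rw [← ENNReal.tsum_mul_left]
        exact tsum_congr fun x => Finset.prod_mul_distrib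
    _ ≤ ∑ p : ∀ i, Fin (m i), (∏ i, (c i (p i) : ℝ≥0∞)) * R := by
        refine Finset.sum_le_sum fun p _ => ?_
        refine mul_le_mul_of_nonneg_left ?_ (zero_le)
        haveI : ∀ i : Fin n, IsProbabilityMeasure
            ((((S i (p i)).card : ℝ≥0∞))⁻¹ •
              Measure.count.restrict (↑(S i (p i)) : Set G)) :=
          fun i => hν_prob i (p i)
        have heq : ∑' x : ((fun x : Fin n → G => (List.ofFn x).prod) ⁻¹' {g}),
            ∏ i, (if (x : Fin n → G) i ∈ S i (p i) then ((k i : ℝ≥0∞))⁻¹ else 0)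
            = ((Measure.pi (fun i => (((S i (p i)).card : ℝ≥0∞))⁻¹ •
                Measure.count.restrict (↑(S i (p i)) : Set G))).map
                  (fun x : Fin n → G => (List.ofFn x).prod)) {g} := by
          rw [mapProd_apply]
          exact tsum_congr fun x => Finset.prod_congr rfl fun i _ => (hν_atom i (p i) _).symm
        rw [heq, hR]
        refine le_iSup₂_of_le (fun i => (((S i (p i)).card : ℝ≥0∞))⁻¹ •
            Measure.count.restrict (↑(S i (p i)) : Set G)) ?_ ?_
        · intro i
          exact ⟨S i (p i), (hScard i (p i)).trans rfl, rfl⟩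
        · exact le_iSup (fun g' : G =>
            ((Measure.pi (fun i => (((S i (p i)).card : ℝ≥0∞))⁻¹ •
              Measure.count.restrict (↑(S i (p i)) : Set G))).map
                (fun x : Fin n → G => (List.ofFn x).prod)) {g'}) g
    _ = R := by
        rw [← Finset.sum_mul]
        have hone : ∑ p : ∀ i, Fin (m i), ∏ i, (c i (p i) : ℝ≥0∞) = 1 := by
          rw [← Fintype.prod_sum (fun (i : Fin n) (t : Fin (m i)) => (c i t : ℝ≥0∞))]
          have : ∀ i : Fin n, ∑ t : Fin (m i), (c i t : ℝ≥0∞) = 1 := by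
            intro i
            rw [← ENNReal.coe_finset_sum, hcsum i, ENNReal.coe_one]
          rw [Finset.prod_congr rfl fun i _ => this i, Finset.prod_const_one]
        rw [hone, one_mul]
end

section
/- Let d ≥ 1, n ≥ 2, θ = (θ_1, …, θ_n) a unit vector in ℝ^n, i ∈ {1, …, n}, and let P_i : ℝ^n → ℝ^n be the orthogonal projection onto e_i^⊥ (the hyperplane orthogonal to the i-th standard basis vector). Let m ∈ {1, …, n−1} and let M ⊆ ℝ^n be an m-dimensional linear subspace. If A is a Borel subset of (⟨θ⟩^⊥)^(d) ⊆ (ℝ^d)^n whose linear span equals M^(d) = M ⊗ ℝ^d, then |θ_i|^d · H^{md}(A) ≤ H^{md}(P_i^(d)(A)), where H^{md} denotes md-dimensional Hausdorff measure on (ℝ^d)^n. -/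
open MeasureTheory
open scoped ENNReal
open Matrix
open scoped RealInnerProductSpace

noncomputable def projL (n d : ℕ) (i : Fin n) :
    EuclideanSpace ℝ (Fin n × Fin d) →ₗ[ℝ] EuclideanSpace ℝ (Fin n × Fin d) where
  toFun x := WithLp.toLp 2 (fun p => if p.1 = i then 0 else x p)
  map_add' x y := by ext p; by_cases h : p.1 = i <;> simp [h]
  map_smul' r x := by ext p; by_cases h : p.1 = i <;> simp [h]

noncomputable def evE (n d : ℕ) (p : Fin n × Fin d) :
    EuclideanSpace ℝ (Fin n × Fin d) →ₗ[ℝ] ℝ where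
  toFun x := x p
  map_add' _ _ := rfl
  map_smul' _ _ := rfl

example (n d : ℕ) (i : Fin n) (x : EuclideanSpace ℝ (Fin n × Fin d)) :
    projL n d i x = WithLp.toLp 2 (fun p => if p.1 = i then 0 else x p) := rfl

noncomputable def rowsSub (n d : ℕ) (M : Submodule ℝ (EuclideanSpace ℝ (Fin n))) :
    Submodule ℝ (EuclideanSpace ℝ (Fin n × Fin d)) where
  carrier := {x | ∀ l : Fin d,
    (show EuclideanSpace ℝ (Fin n) from WithLp.toLp 2 (fun j => x (j, l))) ∈ M}
  add_mem' := fun ha hb l => M.add_mem (ha l) (hb l)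
  zero_mem' := fun l => M.zero_mem
  smul_mem' := fun r a ha l => M.smul_mem r (ha l)

noncomputable def rowsEquiv (n d : ℕ) (M : Submodule ℝ (EuclideanSpace ℝ (Fin n))) :
    rowsSub n d M ≃ₗ[ℝ] (Fin d → M) where
  toFun x := fun l => ⟨WithLp.toLp 2 (fun j => x.1 (j, l)), x.2 l⟩
  map_add' x y := rfl
  map_smul' r x := rfl
  invFun g := ⟨WithLp.toLp 2 (fun p : Fin n × Fin d => (g p.2).1 p.1), fun l => (g l).2⟩
  left_inv x := rfl
  right_inv g := rfl

lemma finrank_rowsSub (n d : ℕ) (M : Submodule ℝ (EuclideanSpace ℝ (Fin n))) :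
    Module.finrank ℝ (rowsSub n d M) = d * Module.finrank ℝ M := by
  rw [LinearEquiv.finrank_eq (rowsEquiv n d M), Module.finrank_pi_fintype]
  simp [Finset.sum_const, Finset.card_univ]


lemma euc_inner_sum {ι : Type*} [Fintype ι] (u v : EuclideanSpace ℝ ι) :
    ⟪u, v⟫ = ∑ q, u q * v q := by
  simp [PiLp.inner_apply, RCLike.inner_apply, starRingEnd_apply]
  exact Finset.sum_congr rfl fun _ _ => mul_comm _ _

lemma proj_inner (n d : ℕ) (i : Fin n) (u v : EuclideanSpace ℝ (Fin n × Fin d)) :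
    ⟪projL n d i u, projL n d i v⟫ = ⟪u, v⟫ - ∑ l, u (i, l) * v (i, l) := by
  classical
  rw [euc_inner_sum, euc_inner_sum, Fintype.sum_prod_type, Fintype.sum_prod_type]
  have hzero : ∑ l, (projL n d i u) (i, l) * (projL n d i v) (i, l) = 0 := by
    apply Finset.sum_eq_zero
    intro l _
    show (if (i, l).1 = i then (0:ℝ) else u (i, l)) * _ = 0
    rw [if_pos rfl, zero_mul]
  have hL : ∑ j, ∑ l, (projL n d i u) (j, l) * (projL n d i v) (j, l)
      = ∑ j ∈ Finset.univ.erase i, ∑ l, u (j, l) * v (j, l) := by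
    rw [← Finset.sum_erase (f := fun j => ∑ l, (projL n d i) u (j, l) * (projL n d i) v (j, l)) Finset.univ hzero]
    apply Finset.sum_congr rfl
    intro j hj
    apply Finset.sum_congr rfl
    intro l _
    have hj' : j ≠ i := (Finset.mem_erase.1 hj).1
    show (if (j, l).1 = i then (0:ℝ) else u (j, l)) * (if (j, l).1 = i then (0:ℝ) else v (j, l))
        = u (j, l) * v (j, l)
    rw [if_neg hj', if_neg hj']
  rw [hL]
  have hGi : (∑ l, u (i, l) * v (i, l))
      + ∑ j ∈ Finset.univ.erase i, ∑ l, u (j, l) * v (j, l)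
      = ∑ j, ∑ l, u (j, l) * v (j, l) :=
    Finset.add_sum_erase Finset.univ (fun j => ∑ l, u (j, l) * v (j, l)) (Finset.mem_univ i)
  linarith


open Matrix in
lemma aux_det_bound {K D : ℕ} (N : Matrix (Fin D) (Fin K) ℝ) (c : ℝ)
    (hN : ∀ v : Fin D → ℝ, (Nᵀ *ᵥ v) ⬝ᵥ (Nᵀ *ᵥ v) ≤ (1 - c ^ 2) * (v ⬝ᵥ v)) :
    (c ^ 2) ^ D ≤ ((1 : Matrix (Fin K) (Fin K) ℝ) - Nᵀ * N).det := by
  have h1 : ((1 : Matrix (Fin K) (Fin K) ℝ) - Nᵀ * N).det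
      = ((1 : Matrix (Fin D) (Fin D) ℝ) - N * Nᵀ).det := by
    have := Matrix.det_one_add_mul_comm (-Nᵀ) N
    simpa [sub_eq_add_neg, Matrix.neg_mul, Matrix.mul_neg] using this
  rw [h1]
  have hBherm : ((1 : Matrix (Fin D) (Fin D) ℝ) - N * Nᵀ).IsHermitian := by
    unfold Matrix.IsHermitian
    rw [conjTranspose_eq_transpose_of_trivial, transpose_sub, transpose_one, transpose_mul,
      transpose_transpose]
  -- positive semidefiniteness of (1-c^2)•1 - N*Nᵀ
  have hpsd : ∀ x : Fin D → ℝ,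
      0 ≤ x ⬝ᵥ (((1 - c ^ 2) • (1 : Matrix (Fin D) (Fin D) ℝ) - N * Nᵀ) *ᵥ x) := by
    intro x
    have h2 : ((1 - c ^ 2) • (1 : Matrix (Fin D) (Fin D) ℝ) - N * Nᵀ) *ᵥ x
        = (1 - c ^ 2) • x - N *ᵥ (Nᵀ *ᵥ x) := by
      rw [Matrix.sub_mulVec, Matrix.smul_mulVec, Matrix.one_mulVec, Matrix.mulVec_mulVec]
    rw [h2, dotProduct_sub, dotProduct_smul, Matrix.dotProduct_mulVec,
      ← Matrix.mulVec_transpose]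
    have h3 := hN x
    have h4 : (Nᵀ *ᵥ x) ⬝ᵥ (Nᵀ *ᵥ x) = (Nᵀ *ᵥ x) ⬝ᵥ (Nᵀ *ᵥ x) := rfl
    simp only [smul_eq_mul]
    linarith [hN x]
  -- eigenvalue lower bound
  have hev : ∀ j : Fin D, c ^ 2 ≤ hBherm.eigenvalues j := by
    intro j
    set lam := hBherm.eigenvalues j with hlam
    have hw0 : ∃ w : Fin D → ℝ, (1 - N * Nᵀ) *ᵥ w = lam • w ∧ w ⬝ᵥ w = 1 := by
      refine ⟨⇑(hBherm.eigenvectorBasis j), hBherm.mulVec_eigenvectorBasis j, ?_⟩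
      have hn1 : ‖hBherm.eigenvectorBasis j‖ = 1 := hBherm.eigenvectorBasis.orthonormal.1 j
      rw [EuclideanSpace.norm_eq, Real.sqrt_eq_one] at hn1
      simpa [dotProduct, ← sq, Real.norm_eq_abs, sq_abs] using hn1
    obtain ⟨w, hmv, hvv⟩ := hw0
    have hNw : (N * Nᵀ) *ᵥ w = w - lam • w := by
      have h8 : (N * Nᵀ) = 1 - (1 - N * Nᵀ) := by rw [sub_sub_cancel]
      rw [h8, Matrix.sub_mulVec, hmv, Matrix.one_mulVec]
    have h6 := hpsd w
    rw [Matrix.sub_mulVec, Matrix.smul_mulVec, Matrix.one_mulVec, hNw] at h6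
    have h9 : w ⬝ᵥ ((1 - c ^ 2) • w - (w - lam • w)) = lam - c ^ 2 := by
      simp [dotProduct_sub, dotProduct_smul, hvv] <;> ring
    rw [h9] at h6
    linarith
  rw [hBherm.det_eq_prod_eigenvalues]
  push_cast
  calc (c ^ 2) ^ D = ∏ _j : Fin D, c ^ 2 := by simp
  _ ≤ ∏ j, hBherm.eigenvalues j := by
      apply Finset.prod_le_prod (fun j _ => sq_nonneg c) (fun j _ => hev j)

set_option maxHeartbeats 1000000 in

/-- comparison of Hausdorff measures of a set in `(⟨θ⟩^⊥)^{(d)}` spanning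
`M^{(d)}` and of its coordinate projection `P_i^{(d)}`. -/
theorem stmt16 (d n : ℕ) (hd : 1 ≤ d) (hn : 2 ≤ n)
    (θ : EuclideanSpace ℝ (Fin n)) (hθ : ‖θ‖ = 1) (i : Fin n)
    (m : ℕ) (hm1 : 1 ≤ m) (hmn : m < n)
    (M : Submodule ℝ (EuclideanSpace ℝ (Fin n))) (hM : Module.finrank ℝ M = m)
    (A : Set (EuclideanSpace ℝ (Fin n × Fin d))) (hA : MeasurableSet A)
    (hAsub : ∀ x ∈ A, ∀ l : Fin d, ∑ j, θ j * x (j, l) = 0)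
    (hspan : (Submodule.span ℝ A : Set (EuclideanSpace ℝ (Fin n × Fin d))) =
      {x | ∀ l : Fin d, (show EuclideanSpace ℝ (Fin n) from WithLp.toLp 2 (fun j => x (j, l))) ∈ M}) :
    ENNReal.ofReal (|θ i| ^ d) * Measure.hausdorffMeasure ((m * d : ℕ) : ℝ) A
      ≤ Measure.hausdorffMeasure ((m * d : ℕ) : ℝ)
          ((fun x : EuclideanSpace ℝ (Fin n × Fin d) =>
            (show EuclideanSpace ℝ (Fin n × Fin d) from
              WithLp.toLp 2 (fun p => if p.1 = i then 0 else x p))) '' A) := by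
  classical
  by_cases hc0 : θ i = 0
  · rw [hc0, abs_zero, zero_pow (by omega : d ≠ 0), ENNReal.ofReal_zero, zero_mul]
    exact zero_le
  set c := θ i with hcdef
  set f := projL n d i with hf
  have himg : (fun x : EuclideanSpace ℝ (Fin n × Fin d) =>
      (show EuclideanSpace ℝ (Fin n × Fin d) from WithLp.toLp 2 (fun p => if p.1 = i then 0 else x p))) '' A = f '' A := rfl
  rw [himg]
  -- basic facts about θ
  have hsum : ∑ j, θ j ^ 2 = 1 := by
    rw [EuclideanSpace.norm_eq, Real.sqrt_eq_one] at hθ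
    simpa [← sq, Real.norm_eq_abs, sq_abs] using hθ
  have herase : ∑ j ∈ Finset.univ.erase i, θ j ^ 2 = 1 - c ^ 2 := by
    have h2 : θ i ^ 2 + ∑ j ∈ Finset.univ.erase i, θ j ^ 2 = 1 := by
      rw [Finset.add_sum_erase Finset.univ (fun j => θ j ^ 2) (Finset.mem_univ i), hsum]
    linarith
  have hc2 : c ^ 2 ≤ 1 := by
    have : 0 ≤ ∑ j ∈ Finset.univ.erase i, θ j ^ 2 :=
      Finset.sum_nonneg fun j _ => sq_nonneg _
    linarith [herase]
  -- the key inequality on the constraint subspace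
  have keyineq : ∀ x : EuclideanSpace ℝ (Fin n × Fin d), (∀ l, ∑ j, θ j * x (j, l) = 0) →
      ∑ l, x (i, l) ^ 2 ≤ (1 - c ^ 2) * ∑ p : Fin n × Fin d, x p ^ 2 := by
    intro x hx
    have hl : ∀ l, c ^ 2 * x (i, l) ^ 2 ≤
        (1 - c ^ 2) * ∑ j ∈ Finset.univ.erase i, x (j, l) ^ 2 := by
      intro l
      have h0 : θ i * x (i, l) + ∑ j ∈ Finset.univ.erase i, θ j * x (j, l) = 0 := by
        rw [Finset.add_sum_erase Finset.univ (fun j => θ j * x (j, l)) (Finset.mem_univ i)]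
        exact hx l
      have hcs := Finset.sum_mul_sq_le_sq_mul_sq (Finset.univ.erase i)
        (fun j => θ j) (fun j => x (j, l))
      have h2 : θ i * x (i, l) = -(∑ j ∈ Finset.univ.erase i, θ j * x (j, l)) := by linarith
      calc c ^ 2 * x (i, l) ^ 2 = (θ i * x (i, l)) ^ 2 := by rw [hcdef]; ring
      _ = (∑ j ∈ Finset.univ.erase i, θ j * x (j, l)) ^ 2 := by rw [h2, neg_sq]
      _ ≤ (∑ j ∈ Finset.univ.erase i, θ j ^ 2) * ∑ j ∈ Finset.univ.erase i, x (j, l) ^ 2 := hcs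
      _ = (1 - c ^ 2) * ∑ j ∈ Finset.univ.erase i, x (j, l) ^ 2 := by rw [herase]
    have hsplit : ∑ p : Fin n × Fin d, x p ^ 2 = ∑ j, ∑ l, x (j, l) ^ 2 :=
      Fintype.sum_prod_type _
    have hST : ∑ l, ∑ j ∈ Finset.univ.erase i, x (j, l) ^ 2
        = (∑ j, ∑ l, x (j, l) ^ 2) - ∑ l, x (i, l) ^ 2 := by
      have he : ∀ l, ∑ j ∈ Finset.univ.erase i, x (j, l) ^ 2
          = (∑ j, x (j, l) ^ 2) - x (i, l) ^ 2 := by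
        intro l
        have h3 : x (i, l) ^ 2 + ∑ j ∈ Finset.univ.erase i, x (j, l) ^ 2
            = ∑ j, x (j, l) ^ 2 :=
          Finset.add_sum_erase Finset.univ (fun j => x (j, l) ^ 2) (Finset.mem_univ i)
        linarith
      rw [Finset.sum_congr rfl (fun l _ => he l), Finset.sum_sub_distrib, Finset.sum_comm]
    have hT := Finset.sum_le_sum (fun l (_ : l ∈ Finset.univ) => hl l)
    rw [← Finset.mul_sum, ← Finset.mul_sum, hST] at hT
    rw [hsplit]
    nlinarith [hT]
  -- the span of A as a submodule, and its rank
  set W : Submodule ℝ (EuclideanSpace ℝ (Fin n × Fin d)) := Submodule.span ℝ A with hW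
  have hAW : A ⊆ (W : Set (EuclideanSpace ℝ (Fin n × Fin d))) := Submodule.subset_span
  have hWconstr : ∀ x ∈ W, ∀ l, ∑ j, θ j * x (j, l) = 0 := by
    intro x hxW l
    have hL : ∀ y : EuclideanSpace ℝ (Fin n × Fin d),
        (∑ j, θ j • evE n d (j, l)) y = ∑ j, θ j * y (j, l) := by
      intro y
      simp [evE, LinearMap.sum_apply]
      rfl
    have hker : x ∈ LinearMap.ker (∑ j, θ j • evE n d (j, l)) := by
      refine Submodule.span_le.2 ?_ hxW
      intro a ha
      simp only [SetLike.mem_coe, LinearMap.mem_ker, hL]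
      exact hAsub a ha l
    rw [LinearMap.mem_ker, hL x] at hker
    exact hker
  have hWD : W = rowsSub n d M := SetLike.coe_injective (by rw [hW]; rw [hspan]; rfl)
  have hrank : Module.finrank ℝ W = m * d := by
    rw [hWD, finrank_rowsSub, hM, mul_comm]
  -- injectivity of f on W
  have hc2pos : 0 < c ^ 2 := by positivity
  have hfinj : ∀ x ∈ W, f x = 0 → x = 0 := by
    intro x hxW hfx
    have hcoord : ∀ p : Fin n × Fin d, p.1 ≠ i → x p = 0 := by
      intro p hp
      have h4 := congrArg (evE n d p) hfx
      rw [map_zero] at h4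
      have h5 : (if p.1 = i then (0 : ℝ) else x p) = 0 := h4
      rwa [if_neg hp] at h5
    have hS : ∑ p : Fin n × Fin d, x p ^ 2 = ∑ l, x (i, l) ^ 2 := by
      rw [Fintype.sum_prod_type (fun p : Fin n × Fin d => x p ^ 2)]
      rw [Finset.sum_eq_single i (fun j _ hj => by
        apply Finset.sum_eq_zero; intro l _
        rw [hcoord (j, l) hj]; ring) (fun h => absurd (Finset.mem_univ i) h)]
    have hkey := keyineq x (hWconstr x hxW)
    rw [hS] at hkey
    have hT0 : ∑ l, x (i, l) ^ 2 = 0 := by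
      have hTnn : 0 ≤ ∑ l, x (i, l) ^ 2 := Finset.sum_nonneg fun l _ => sq_nonneg _
      nlinarith
    have hall : ∀ p : Fin n × Fin d, x p = 0 := by
      intro p
      by_cases hp : p.1 = i
      · have h6 := (Finset.sum_eq_zero_iff_of_nonneg
          (fun l (_ : l ∈ Finset.univ) => sq_nonneg (x (i, l)))).1 hT0 p.2 (Finset.mem_univ _)
        have h7 : x (i, p.2) = 0 := by
          have := sq_eq_zero_iff.1 h6; exact this
        rw [← hp] at h7
        exact h7
      · exact hcoord p hp
    ext p
    exact hall p
  -- isometric identifications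
  let φ : EuclideanSpace ℝ (Fin (m * d)) ≃ₗᵢ[ℝ] W :=
    ((stdOrthonormalBasis ℝ W).reindex (finCongr hrank)).repr.symm
  let J₁ : EuclideanSpace ℝ (Fin (m * d)) →ₗᵢ[ℝ] EuclideanSpace ℝ (Fin n × Fin d) :=
    W.subtypeₗᵢ.comp φ.toLinearIsometry
  have hJ₁ : ∀ v, J₁ v = (φ v : EuclideanSpace ℝ (Fin n × Fin d)) := fun v => rfl
  have hJ₁range : Set.range ⇑J₁ = (W : Set (EuclideanSpace ℝ (Fin n × Fin d))) := by
    ext x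
    constructor
    · rintro ⟨v, rfl⟩; exact (φ v).2
    · intro hx
      refine ⟨φ.symm ⟨x, hx⟩, ?_⟩
      rw [hJ₁, φ.apply_symm_apply]
  have hcompinj : Function.Injective (f ∘ₗ W.subtype) := by
    rw [← LinearMap.ker_eq_bot, LinearMap.ker_eq_bot']
    intro x hx
    exact Subtype.ext (hfinj x.1 x.2 hx)
  have hmapeq : W.map f = LinearMap.range (f ∘ₗ W.subtype) := by
    rw [LinearMap.range_comp, Submodule.range_subtype]
  have hW'rank : Module.finrank ℝ (W.map f) = m * d := by
    rw [hmapeq, LinearMap.finrank_range_of_inj hcompinj, hrank]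
  let ψ : EuclideanSpace ℝ (Fin (m * d)) ≃ₗᵢ[ℝ] (W.map f) :=
    ((stdOrthonormalBasis ℝ (W.map f)).reindex (finCongr hW'rank)).repr.symm
  let J₂ : EuclideanSpace ℝ (Fin (m * d)) →ₗᵢ[ℝ] EuclideanSpace ℝ (Fin n × Fin d) :=
    (W.map f).subtypeₗᵢ.comp ψ.toLinearIsometry
  let g : W →ₗ[ℝ] (W.map f) :=
    (f ∘ₗ W.subtype).codRestrict (W.map f) (fun x => Submodule.mem_map_of_mem x.2)
  let h : EuclideanSpace ℝ (Fin (m * d)) →ₗ[ℝ] EuclideanSpace ℝ (Fin (m * d)) :=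
    ψ.symm.toLinearEquiv.toLinearMap ∘ₗ g ∘ₗ φ.toLinearEquiv.toLinearMap
  have hcomm : ∀ v, f (J₁ v) = J₂ (h v) := by
    intro v
    show f ↑(φ v) = ↑(ψ (ψ.symm (g (φ v))))
    rw [ψ.apply_symm_apply]
    rfl
  -- transfer of sets and measures
  set A₀ : Set (EuclideanSpace ℝ (Fin (m * d))) := ⇑J₁ ⁻¹' A with hA₀def
  have hA₀ : ⇑J₁ '' A₀ = A :=
    Set.image_preimage_eq_of_subset (by rw [hJ₁range]; exact hAW)
  have hdnn : (0 : ℝ) ≤ ((m * d : ℕ) : ℝ) := Nat.cast_nonneg _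
  have hmu1 : μH[((m * d : ℕ) : ℝ)] A = μH[((m * d : ℕ) : ℝ)] A₀ := by
    rw [← hA₀, J₁.isometry.hausdorffMeasure_image (Or.inl hdnn)]
  have himg2 : ⇑f '' A = ⇑J₂ '' (⇑h '' A₀) := by
    rw [← hA₀, ← Set.image_comp, ← Set.image_comp]
    exact Set.image_congr fun v _ => hcomm v
  have hmu2 : μH[((m * d : ℕ) : ℝ)] (⇑f '' A) = μH[((m * d : ℕ) : ℝ)] (⇑h '' A₀) := by
    rw [himg2, J₂.isometry.hausdorffMeasure_image (Or.inl hdnn)]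
  have hmu3 : (μH[((m * d : ℕ) : ℝ)] : Measure (EuclideanSpace ℝ (Fin (m * d)))) (⇑h '' A₀)
      = ENNReal.ofReal |LinearMap.det h| * μH[((m * d : ℕ) : ℝ)] A₀ := by
    have hfr : ((m * d : ℕ) : ℝ)
        = ((Module.finrank ℝ (EuclideanSpace ℝ (Fin (m * d))) : ℕ) : ℝ) := by
      rw [finrank_euclideanSpace_fin]
    rw [hfr]
    exact Measure.addHaar_image_linearMap _ h A₀
  have hdetbound : |c| ^ d ≤ |LinearMap.det h| := by
    set bas := (EuclideanSpace.basisFun (Fin (m * d)) ℝ).toBasis with hbas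
    set Mm := LinearMap.toMatrix bas bas h with hMm
    have hdeth : LinearMap.det h = Mm.det := (LinearMap.det_toMatrix bas h).symm
    set N : Matrix (Fin d) (Fin (m * d)) ℝ := fun l a => (J₁ (bas a)) (i, l) with hNdef
    have hMentry : ∀ q a, Mm q a = (h (bas a)) q := by
      intro q a
      rw [hMm, LinearMap.toMatrix_apply, hbas, OrthonormalBasis.coe_toBasis_repr_apply,
        EuclideanSpace.basisFun_repr]
    have hMN : Mmᵀ * Mm = 1 - Nᵀ * N := by
      ext a b
      rw [Matrix.mul_apply, Matrix.sub_apply, Matrix.one_apply, Matrix.mul_apply]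
      have hL : ∑ q, Mmᵀ a q * Mm q b = ∑ q, (h (bas a)) q * (h (bas b)) q := by
        apply Finset.sum_congr rfl
        intro q _
        rw [Matrix.transpose_apply, hMentry, hMentry]
      rw [hL]
      have e1 : ∑ q, (h (bas a)) q * (h (bas b)) q = ⟪h (bas a), h (bas b)⟫ :=
        (euc_inner_sum _ _).symm
      have e2 : ⟪h (bas a), h (bas b)⟫ = ⟪J₂ (h (bas a)), J₂ (h (bas b))⟫ :=
        (J₂.inner_map_map _ _).symm
      have e3 : (J₂ (h (bas a)) : EuclideanSpace ℝ (Fin n × Fin d)) = f (J₁ (bas a)) :=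
        (hcomm _).symm
      have e3' : (J₂ (h (bas b)) : EuclideanSpace ℝ (Fin n × Fin d)) = f (J₁ (bas b)) :=
        (hcomm _).symm
      have e4 : ⟪f (J₁ (bas a)), f (J₁ (bas b))⟫
          = ⟪J₁ (bas a), J₁ (bas b)⟫ - ∑ l, (J₁ (bas a)) (i, l) * (J₁ (bas b)) (i, l) :=
        proj_inner n d i _ _
      have e5 : ⟪J₁ (bas a), J₁ (bas b)⟫ = ⟪(bas a : EuclideanSpace ℝ (Fin (m * d))), bas b⟫ :=
        J₁.inner_map_map _ _
      have e6 : ⟪(bas a : EuclideanSpace ℝ (Fin (m * d))), bas b⟫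
          = if a = b then (1 : ℝ) else 0 := by
        have horm := (EuclideanSpace.basisFun (Fin (m * d)) ℝ).orthonormal
        rw [orthonormal_iff_ite] at horm
        have := horm a b
        rw [hbas]
        simpa [OrthonormalBasis.coe_toBasis] using this
      have e7 : ∑ l, (J₁ (bas a)) (i, l) * (J₁ (bas b)) (i, l) = ∑ l, Nᵀ a l * N l b := by
        apply Finset.sum_congr rfl
        intro l _
        rw [Matrix.transpose_apply, hNdef]
      rw [e1, e2, e3, e3', e4, e5, e6, e7]
    have hdet2 : Mm.det ^ 2 = ((1 : Matrix (Fin (m * d)) (Fin (m * d)) ℝ) - Nᵀ * N).det := by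
      rw [← hMN, Matrix.det_mul, Matrix.det_transpose, sq]
    have hNbound : ∀ v : Fin d → ℝ, (Nᵀ *ᵥ v) ⬝ᵥ (Nᵀ *ᵥ v) ≤ (1 - c ^ 2) * (v ⬝ᵥ v) := by
      intro v
      set z : EuclideanSpace ℝ (Fin (m * d)) := WithLp.toLp 2 (Nᵀ *ᵥ v : Fin (m * d) → ℝ) with hz
      set u : EuclideanSpace ℝ (Fin n × Fin d) := J₁ z with hu
      have huW : u ∈ W := by rw [hu, hJ₁ z]; exact (φ z).2
      have huc : ∀ l, ∑ j, θ j * u (j, l) = 0 := hWconstr u huW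
      have hub : ∀ l, u (i, l) = ∑ a, z a * N l a := by
        intro l
        have hzsum : ∑ a, z a • (bas a : EuclideanSpace ℝ (Fin (m * d))) = z := by
          have hsr := bas.sum_repr z
          have hrepr : ∀ a, bas.repr z a = z a := by
            intro a
            rw [hbas, OrthonormalBasis.coe_toBasis_repr_apply, EuclideanSpace.basisFun_repr]
          calc ∑ a, z a • (bas a : EuclideanSpace ℝ (Fin (m * d)))
              = ∑ a, bas.repr z a • (bas a : EuclideanSpace ℝ (Fin (m * d))) := by
                apply Finset.sum_congr rfl
                intro a _
                rw [hrepr a]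
          _ = z := hsr
        calc u (i, l) = evE n d (i, l) (J₁.toLinearMap z) := rfl
        _ = evE n d (i, l) (J₁.toLinearMap (∑ a, z a • (bas a : EuclideanSpace ℝ (Fin (m * d))))) := by
            rw [hzsum]
        _ = ∑ a, z a * (J₁ (bas a)) (i, l) := by
            rw [map_sum, map_sum]
            apply Finset.sum_congr rfl
            intro a _
            rw [J₁.toLinearMap.map_smul, (evE n d (i, l)).map_smul]
            rfl
        _ = ∑ a, z a * N l a := rfl
      have hteq : (Nᵀ *ᵥ v) ⬝ᵥ (Nᵀ *ᵥ v) = ∑ l, v l * u (i, l) := by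
        calc (Nᵀ *ᵥ v) ⬝ᵥ (Nᵀ *ᵥ v) = ∑ a, z a * (∑ l, N l a * v l) := rfl
        _ = ∑ a, ∑ l, z a * (N l a * v l) := by
            apply Finset.sum_congr rfl
            intro a _
            rw [Finset.mul_sum]
        _ = ∑ l, ∑ a, z a * (N l a * v l) := Finset.sum_comm
        _ = ∑ l, v l * u (i, l) := by
            apply Finset.sum_congr rfl
            intro l _
            rw [hub l, Finset.mul_sum]
            apply Finset.sum_congr rfl
            intro a _
            ring
      have hacs := Finset.sum_mul_sq_le_sq_mul_sq Finset.univ (fun l => v l) (fun l => u (i, l))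
      have hkey := keyineq u huc
      have hSu : ∑ p : Fin n × Fin d, u p ^ 2 = (Nᵀ *ᵥ v) ⬝ᵥ (Nᵀ *ᵥ v) := by
        have h1 : ∑ p : Fin n × Fin d, u p ^ 2 = ⟪u, u⟫ := by
          rw [euc_inner_sum]
          apply Finset.sum_congr rfl
          intro p _
          ring
        have h2 : ⟪u, u⟫ = ⟪z, z⟫ := by rw [hu]; exact J₁.inner_map_map _ _
        have h3 : ⟪z, z⟫ = (Nᵀ *ᵥ v) ⬝ᵥ (Nᵀ *ᵥ v) := by
          rw [euc_inner_sum]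
          rfl
        rw [h1, h2, h3]
      rw [hSu] at hkey
      set t := (Nᵀ *ᵥ v) ⬝ᵥ (Nᵀ *ᵥ v) with ht
      have htnn : 0 ≤ t := by
        rw [ht]
        exact Finset.sum_nonneg fun a _ => mul_self_nonneg _
      have hvv : ∑ l, v l ^ 2 = v ⬝ᵥ v := by
        apply Finset.sum_congr rfl
        intro l _
        ring
      have hvnn : 0 ≤ v ⬝ᵥ v := Finset.sum_nonneg fun l _ => mul_self_nonneg _
      have ht2 : t ^ 2 ≤ (v ⬝ᵥ v) * ((1 - c ^ 2) * t) := by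
        calc t ^ 2 = (∑ l, v l * u (i, l)) ^ 2 := by rw [hteq]
        _ ≤ (∑ l, v l ^ 2) * ∑ l, u (i, l) ^ 2 := hacs
        _ ≤ (v ⬝ᵥ v) * ((1 - c ^ 2) * t) := by
            rw [hvv]
            apply mul_le_mul_of_nonneg_left hkey hvnn
      rcases eq_or_lt_of_le htnn with h0 | h0
      · rw [← h0]
        exact mul_nonneg (by linarith) hvnn
      · have h5 : t * t ≤ ((1 - c ^ 2) * (v ⬝ᵥ v)) * t := by
          have h6 : (v ⬝ᵥ v) * ((1 - c ^ 2) * t) = ((1 - c ^ 2) * (v ⬝ᵥ v)) * t := by ring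
          rw [← sq, ← h6]
          exact ht2
        exact le_of_mul_le_mul_right h5 h0
    have hdb := aux_det_bound N c hNbound
    rw [← hdet2] at hdb
    rw [hdeth]
    have habs : (|c| ^ d) ^ 2 ≤ |Mm.det| ^ 2 := by
      calc (|c| ^ d) ^ 2 = (|c| ^ 2) ^ d := by rw [← pow_mul, ← pow_mul, mul_comm]
      _ = (c ^ 2) ^ d := by rw [sq_abs]
      _ ≤ Mm.det ^ 2 := hdb
      _ = |Mm.det| ^ 2 := (sq_abs _).symm
    exact (pow_le_pow_iff_left₀ (by positivity) (abs_nonneg _) two_ne_zero).1 habs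
  calc ENNReal.ofReal (|c| ^ d) * μH[((m * d : ℕ) : ℝ)] A
      = ENNReal.ofReal (|c| ^ d) * μH[((m * d : ℕ) : ℝ)] A₀ := by rw [hmu1]
    _ ≤ ENNReal.ofReal |LinearMap.det h| * μH[((m * d : ℕ) : ℝ)] A₀ :=
        mul_le_mul_left (ENNReal.ofReal_le_ofReal hdetbound) _
    _ = μH[((m * d : ℕ) : ℝ)] (⇑h '' A₀) := hmu3.symm
    _ = μH[((m * d : ℕ) : ℝ)] (⇑f '' A) := hmu2.symm
end
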